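/- arXiv:1309.4291 — 2 statements merged into one kernel-verified Lean document; each statement's English description precedes it below -/
import Mathlib

section
/- Consider a finite recurrent MDP on S that is skip-free in the negative direction on the tree. Let d be a fixed stationary deterministic policy and x ∈ ℝ. Define y_i and t_i for i ≠ 0 by downward recursion: y_i = (c_i(d(i)) − x + ∑_{k∈D(i)} p̄_{ik}(d(i)) y_k)/p_{iρ(i)}(d(i)) and t_i = (1 + ∑_{k∈D(i)} p̄_{ik}(d(i)) t_k)/p_{iρ(i)}(d(i)) (empty sums when D(i) = ∅). Then: (a) for each i ≠ 0, y_i equals the expected x-revised first-passage cost from i to ρ(i) under d and t_i equals the expected first-passage time from i to ρ(i) under d; (b) H(d, x) = (c_0(d(0)) − x + ∑_{k∈D(0)} p̄_{0k}(d(0)) y_k)/(1 − p_{00}(d(0))) and τ(d) = (1 + ∑_{k∈D(0)} p̄_{0k}(d(0)) t_k)/(1 − p_{00}(d(0))); (c) if x = 0 then g(d) = (c_0(d(0)) + ∑_{k∈D(0)} p̄_{0k}(d(0)) y_k)/(1 + ∑_{k∈D(0)} p̄_{0k}(d(0)) t_k). -/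
open Finset Filter

noncomputable section

/-- A rooted tree structure on a state space `S`: a root, a parent map fixing the root,
such that iterating the parent map from any state reaches the root. -/
structure SFTree (S : Type*) where
  root : S
  parent : S → S
  parent_root : parent root = root
  reaches_root : ∀ i : S, ∃ n : ℕ, parent^[n] i = root

namespace SFTree

variable {S : Type*} [Fintype S] [DecidableEq S]

open Classical in
/-- The set of descendants of `i`: states `j ≠ i` whose path to the root passes through `i`. -/
def desc (T : SFTree S) (i : S) : Finset S :=
  Finset.univ.filter fun j => j ≠ i ∧ ∃ n : ℕ, T.parent^[n] j = i

open Classical in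
/-- The subtree rooted at `i`: `i` together with its descendants. -/
def subtree (T : SFTree S) (i : S) : Finset S :=
  Finset.univ.filter fun j => ∃ n : ℕ, T.parent^[n] j = i

open Classical in
/-- The states strictly after `i` on the path from `i` to `j`. -/
def delta (T : SFTree S) (i j : S) : Finset S :=
  Finset.univ.filter fun r =>
    r ≠ i ∧ (∃ n : ℕ, T.parent^[n] j = r) ∧ (∃ m : ℕ, T.parent^[m] r = i)

end SFTree

/-- A finite Markov decision process: costs and transition probabilities. -/
structure MDP (S A : Type*) [Fintype S] where
  c : S → A → ℝ
  p : S → A → S → ℝ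
  p_nonneg : ∀ i a j, 0 ≤ p i a j
  p_sum_one : ∀ i a, ∑ j, p i a j = 1

namespace MDP

variable {S A : Type*} [Fintype S] [DecidableEq S]

/-- Tail probability: the probability of jumping from `i` into the subtree rooted at `k`. -/
def ptail (M : MDP S A) (T : SFTree S) (i : S) (a : A) (k : S) : ℝ :=
  ∑ s ∈ T.subtree k, M.p i a s

/-- Skip-free in the negative direction on the tree `T`: from `i ≠ root` the only possible
transitions are to the parent of `i` or into the subtree rooted at `i`. -/
def IsSkipFree (M : MDP S A) (T : SFTree S) : Prop :=
  ∀ i, i ≠ T.root → ∀ a j, M.p i a j ≠ 0 → j = T.parent i ∨ j ∈ T.subtree i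

/-- Transition matrix of the stationary deterministic policy `d`. -/
def Pmat (M : MDP S A) (d : S → A) : Matrix S S ℝ :=
  Matrix.of fun i j => M.p i (d i) j

/-- Cost vector of the stationary deterministic policy `d`. -/
def cvec (M : MDP S A) (d : S → A) : S → ℝ := fun i => M.c i (d i)

/-- Expected average cost of the stationary deterministic policy `d` starting from `i`. -/
def avgCost (M : MDP S A) (d : S → A) (i : S) : ℝ :=
  Filter.limsup
    (fun n : ℕ => (n : ℝ)⁻¹ * ∑ t ∈ Finset.range n, ((M.Pmat d ^ t).mulVec (M.cvec d)) i)
    Filter.atTop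

end MDP

/-- A (substochastic) matrix is irreducible if every state can reach every other state
in a positive number of steps. -/
def MatIrreducible {S : Type*} [Fintype S] [DecidableEq S] (P : Matrix S S ℝ) : Prop :=
  ∀ i j, ∃ n : ℕ, 0 < n ∧ 0 < (P ^ n) i j

/-- A recurrent model: every stationary deterministic policy has an irreducible
transition matrix. -/
def IsRecurrentModel {S A : Type*} [Fintype S] [DecidableEq S] (M : MDP S A) : Prop :=
  ∀ d : S → A, MatIrreducible (M.Pmat d)

/-- The probability weight of a path of length `n`. -/
def pathWt {S : Type*} [Fintype S] (P : Matrix S S ℝ) {n : ℕ} (x : Fin (n + 1) → S) : ℝ :=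
  ∏ t : Fin n, P (x t.castSucc) (x t.succ)

open Classical in
/-- `E[f(X_n); τ > n]` for the chain with matrix `P` started at `z`, where `τ` is the
first-return epoch to `z` (the first time the chain enters `z` from a state `≠ z`). -/
def retTerm {S : Type*} [Fintype S] (P : Matrix S S ℝ) (z : S) (f : S → ℝ) (n : ℕ) : ℝ :=
  ∑ x ∈ Finset.univ.filter
      (fun (x : Fin (n + 1) → S) =>
        x 0 = z ∧ ∀ t : Fin n, ¬(x t.castSucc ≠ z ∧ x t.succ = z)),
    pathWt P x * f (x (Fin.last n))

/-- `E[∑_{t=0}^{τ-1} f(X_t)]` for the chain with matrix `P` started at `z`, where `τ` is the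
first-return epoch to `z`. -/
def retSum {S : Type*} [Fintype S] (P : Matrix S S ℝ) (z : S) (f : S → ℝ) : ℝ :=
  ∑' n : ℕ, retTerm P z f n

open Classical in
/-- `E[f(X_n); σ > n]` for the chain with matrix `P` started at `i`, where `σ` is the
first-passage epoch to `z`, `σ = min {t > 0 : X_t = z}`. -/
def passTerm {S : Type*} [Fintype S] (P : Matrix S S ℝ) (i z : S) (f : S → ℝ) (n : ℕ) : ℝ :=
  ∑ x ∈ Finset.univ.filter
      (fun (x : Fin (n + 1) → S) => x 0 = i ∧ ∀ t : Fin n, x t.succ ≠ z),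
    pathWt P x * f (x (Fin.last n))

/-- `E[∑_{t=0}^{σ-1} f(X_t)]` for the chain with matrix `P` started at `i`, where `σ` is the
first-passage epoch to `z`. -/
def passSum {S : Type*} [Fintype S] (P : Matrix S S ℝ) (i z : S) (f : S → ℝ) : ℝ :=
  ∑' n : ℕ, passTerm P i z f n

end

set_option linter.unusedSectionVars false

namespace Stmt8Aux

variable {S : Type*} [Fintype S] [DecidableEq S] [Nonempty S]

/-- Row sum of the n-th power. -/
def rs (Q : Matrix S S ℝ) (n : ℕ) (i : S) : ℝ := ∑ j, (Q ^ n) i j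

lemma pow_nonneg' {Q : Matrix S S ℝ} (h : ∀ i j, 0 ≤ Q i j) (n : ℕ) :
    ∀ i j, 0 ≤ (Q ^ n) i j := by
  induction n with
  | zero => intro i j; simp only [pow_zero, Matrix.one_apply]; split <;> norm_num
  | succ n ih =>
      intro i j
      rw [pow_succ, Matrix.mul_apply]
      exact Finset.sum_nonneg fun k _ => mul_nonneg (ih i k) (h k j)

lemma rs_zero (Q : Matrix S S ℝ) (i : S) : rs Q 0 i = 1 := by
  simp [rs, Matrix.one_apply]

lemma rs_nonneg {Q : Matrix S S ℝ} (h : ∀ i j, 0 ≤ Q i j) (n : ℕ) (i : S) :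
    0 ≤ rs Q n i :=
  Finset.sum_nonneg fun j _ => pow_nonneg' h n i j

lemma rs_add (Q : Matrix S S ℝ) (a b : ℕ) (i : S) :
    rs Q (a + b) i = ∑ k, (Q ^ a) i k * rs Q b k := by
  simp only [rs, pow_add, Matrix.mul_apply, Finset.mul_sum]
  rw [Finset.sum_comm]

lemma rs_succ (Q : Matrix S S ℝ) (n : ℕ) (i : S) :
    rs Q (n + 1) i = ∑ k, (Q ^ n) i k * rs Q 1 k := by
  rw [← rs_add]

lemma rs_succ' (Q : Matrix S S ℝ) (n : ℕ) (i : S) :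
    rs Q (n + 1) i = ∑ k, Q i k * rs Q n k := by
  have h := rs_add Q 1 n i
  rw [add_comm 1 n] at h
  simpa [pow_one] using h

lemma rs_antitone {Q : Matrix S S ℝ} (h0 : ∀ i j, 0 ≤ Q i j)
    (h1 : ∀ i, rs Q 1 i ≤ 1) : ∀ {n m : ℕ}, n ≤ m → ∀ i, rs Q m i ≤ rs Q n i := by
  have step : ∀ n i, rs Q (n + 1) i ≤ rs Q n i := by
    intro n i
    rw [rs_succ]
    calc ∑ k, (Q ^ n) i k * rs Q 1 k ≤ ∑ k, (Q ^ n) i k * 1 :=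
          Finset.sum_le_sum fun k _ =>
            mul_le_mul_of_nonneg_left (h1 k) (pow_nonneg' h0 n i k)
      _ = rs Q n i := by simp [rs]
  intro n m hnm
  induction hnm with
  | refl => intro i; exact le_rfl
  | step _ ih => intro i; exact le_trans (step _ i) (ih i)

/-- Geometric decay of row sums under an `m`-step contraction. -/
lemma rs_le_geom {Q : Matrix S S ℝ} (h0 : ∀ i j, 0 ≤ Q i j)
    (h1 : ∀ i, rs Q 1 i ≤ 1) {m : ℕ} {ε : ℝ} (hm : 0 < m) (hε : 0 < ε)
    (hc : ∀ i, rs Q m i ≤ 1 - ε) :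
    ∀ n i, rs Q n i ≤ (1 - ε) ^ (n / m) := by
  have hεle : 0 ≤ 1 - ε := le_trans (rs_nonneg h0 m (Classical.arbitrary S)) (hc _)
  intro n
  induction n using Nat.strong_induction_on with
  | _ n ih =>
    intro i
    by_cases hn : n < m
    · rw [Nat.div_eq_of_lt hn]
      simpa [rs_zero] using rs_antitone h0 h1 (Nat.zero_le n) i
    · push_neg at hn
      have hdiv : n / m = (n - m) / m + 1 := Nat.div_eq_sub_div hm hn
      have hrw : n = m + (n - m) := by omega
      have key : rs Q n i ≤ (1 - ε) * (1 - ε) ^ ((n - m) / m) := by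
        conv_lhs => rw [hrw]
        rw [rs_add]
        calc ∑ k, (Q ^ m) i k * rs Q (n - m) k
            ≤ ∑ k, (Q ^ m) i k * (1 - ε) ^ ((n - m) / m) :=
              Finset.sum_le_sum fun k _ =>
                mul_le_mul_of_nonneg_left (ih (n - m) (by omega) k) (pow_nonneg' h0 m i k)
          _ = rs Q m i * (1 - ε) ^ ((n - m) / m) := by rw [← Finset.sum_mul]; rfl
          _ ≤ (1 - ε) * (1 - ε) ^ ((n - m) / m) :=
              mul_le_mul_of_nonneg_right (hc i) (pow_nonneg hεle _)
      rw [hdiv, pow_succ]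
      calc rs Q n i ≤ (1 - ε) * (1 - ε) ^ ((n - m) / m) := key
        _ = (1 - ε) ^ ((n - m) / m) * (1 - ε) := mul_comm _ _

set_option maxHeartbeats 1000000 in
lemma summable_pow_div {r : ℝ} (h0 : 0 ≤ r) (h1 : r < 1) {m : ℕ} (hm : 0 < m) :
    Summable fun n : ℕ => r ^ (n / m) := by
  have : NeZero m := ⟨hm.ne'⟩
  rw [← (Nat.divModEquiv m).symm.summable_iff]
  have hfun : ((fun n : ℕ => r ^ (n / m)) ∘ ⇑(Nat.divModEquiv m).symm)
      = fun p : ℕ × Fin m => r ^ p.1 := by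
    funext p
    simp only [Function.comp_apply, Nat.divModEquiv, Equiv.coe_fn_symm_mk]
    rw [mul_comm, Nat.mul_add_div hm, Nat.div_eq_of_lt p.2.2, add_zero]
  rw [hfun]
  have hone : Summable (fun _ : Fin m => (1:ℝ)) := Summable.of_finite
  have hs : Summable fun p : ℕ × Fin m => r ^ p.1 * ((fun _ : Fin m => (1:ℝ)) p.2) :=
    Summable.mul_of_nonneg (summable_geometric_of_lt_one h0 h1)
      hone (fun n => pow_nonneg h0 n) (fun _ => zero_le_one)
  simpa using hs

end Stmt8Aux
namespace Stmt8Aux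

variable {S : Type*} [Fintype S] [DecidableEq S] [Nonempty S]

lemma exists_bound (f : S → ℝ) : ∃ C : ℝ, 0 ≤ C ∧ (∀ j, |f j| ≤ C) ∧ ∃ j₀, C = |f j₀| := by
  obtain ⟨j₀, _, hj₀⟩ := Finset.exists_mem_eq_sup' (Finset.univ_nonempty (α := S))
    (fun j => |f j|)
  refine ⟨Finset.univ.sup' Finset.univ_nonempty fun j => |f j|, ?_, ?_, ⟨j₀, hj₀⟩⟩
  · exact le_trans (abs_nonneg (f j₀)) (Finset.le_sup' (fun j => |f j|) (Finset.mem_univ j₀))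
  · exact fun j => Finset.le_sup' (fun j => |f j|) (Finset.mem_univ j)

lemma mulVec_apply (Q : Matrix S S ℝ) (f : S → ℝ) (i : S) :
    Q.mulVec f i = ∑ j, Q i j * f j := rfl

/-- A contraction certificate for a nonnegative substochastic matrix. -/
structure Contr (Q : Matrix S S ℝ) : Prop where
  nonneg : ∀ i j, 0 ≤ Q i j
  sub : ∀ i, rs Q 1 i ≤ 1
  bound : ∃ m ε, 0 < m ∧ 0 < ε ∧ ε ≤ 1 ∧ ∀ i, rs Q m i ≤ 1 - ε

/-- `∑' n, (Q^n f) i`. -/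
noncomputable def qsum (Q : Matrix S S ℝ) (f : S → ℝ) (i : S) : ℝ :=
  ∑' n : ℕ, ((Q ^ n).mulVec f) i

lemma abs_mulVec_le {Q : Matrix S S ℝ} (h0 : ∀ i j, 0 ≤ Q i j) (n : ℕ) {f : S → ℝ}
    {C : ℝ} (hub : ∀ j, |f j| ≤ C) (i : S) : |((Q ^ n).mulVec f) i| ≤ rs Q n i * C := by
  calc |((Q ^ n).mulVec f) i| = |∑ j, (Q ^ n) i j * f j| := by rw [mulVec_apply]
    _ ≤ ∑ j, |(Q ^ n) i j * f j| := Finset.abs_sum_le_sum_abs _ _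
    _ ≤ ∑ j, (Q ^ n) i j * C := by
        refine Finset.sum_le_sum fun j _ => ?_
        rw [abs_mul, abs_of_nonneg (pow_nonneg' h0 n i j)]
        exact mul_le_mul_of_nonneg_left (hub j) (pow_nonneg' h0 n i j)
    _ = rs Q n i * C := by rw [← Finset.sum_mul]; rfl

lemma Contr.summable {Q : Matrix S S ℝ} (hQ : Contr Q) (f : S → ℝ) (i : S) :
    Summable fun n : ℕ => ((Q ^ n).mulVec f) i := by
  obtain ⟨m, ε, hm, hε, hε1, hc⟩ := hQ.bound
  obtain ⟨C, hC0, hub, -⟩ := exists_bound f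
  refine Summable.of_norm_bounded (g := fun n => (1 - ε) ^ (n / m) * C) ?_ ?_
  · exact (summable_pow_div (by linarith) (by linarith) hm).mul_right C
  · intro n
    refine le_trans (abs_mulVec_le hQ.nonneg n hub i) ?_
    exact mul_le_mul_of_nonneg_right (rs_le_geom hQ.nonneg hQ.sub hm hε hc n i) hC0

/-- The fixed-point equation for `qsum`. -/
lemma qsum_fixed {Q : Matrix S S ℝ} (hQ : Contr Q) (f : S → ℝ) (i : S) :
    qsum Q f i = f i + (Q.mulVec (qsum Q f)) i := by
  have hsum := hQ.summable f i
  rw [qsum, Summable.tsum_eq_zero_add hsum]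
  congr 1
  · rw [pow_zero, Matrix.one_mulVec]
  · have hterm : ∀ n : ℕ, ((Q ^ (n + 1)).mulVec f) i = ∑ k, Q i k * ((Q ^ n).mulVec f) k := by
      intro n
      rw [pow_succ', ← Matrix.mulVec_mulVec]
      rw [mulVec_apply]
    calc (∑' n : ℕ, ((Q ^ (n + 1)).mulVec f) i)
        = ∑' n : ℕ, ∑ k, Q i k * ((Q ^ n).mulVec f) k := tsum_congr hterm
      _ = ∑ k, ∑' n : ℕ, Q i k * ((Q ^ n).mulVec f) k := by
          refine Summable.tsum_finsetSum fun k _ => ?_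
          exact (hQ.summable f k).mul_left _
      _ = ∑ k, Q i k * qsum Q f k := by
          refine Finset.sum_congr rfl fun k _ => ?_
          rw [qsum, tsum_mul_left]
      _ = (Q.mulVec (qsum Q f)) i := (mulVec_apply _ _ _).symm

/-- Uniqueness: a function vanishing outside `W` and harmonic on `W` is zero. -/
lemma harmonic_zero {Q : Matrix S S ℝ} (hQ : Contr Q) {W : Finset S} {w : S → ℝ}
    (heq : ∀ j ∈ W, w j = (Q.mulVec w) j) (hout : ∀ j ∉ W, w j = 0) :
    ∀ j, w j = 0 := by
  obtain ⟨m, ε, hm, hε, hε1, hc⟩ := hQ.bound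
  obtain ⟨C, hC0, hub, j₀, hj₀⟩ := exists_bound w
  have key : ∀ n j, |w j| ≤ rs Q n j * C := by
    intro n
    induction n with
    | zero => intro j; rw [rs_zero, one_mul]; exact hub j
    | succ n ih =>
        intro j
        by_cases hj : j ∈ W
        · rw [heq j hj]
          calc |(Q.mulVec w) j| = |∑ k, Q j k * w k| := by rw [mulVec_apply]
            _ ≤ ∑ k, |Q j k * w k| := Finset.abs_sum_le_sum_abs _ _
            _ ≤ ∑ k, Q j k * (rs Q n k * C) := by
                refine Finset.sum_le_sum fun k _ => ?_
                rw [abs_mul, abs_of_nonneg (hQ.nonneg j k)]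
                exact mul_le_mul_of_nonneg_left (ih k) (hQ.nonneg j k)
            _ = (∑ k, Q j k * rs Q n k) * C := by
                rw [Finset.sum_mul]; exact Finset.sum_congr rfl fun k _ => by ring
            _ = rs Q (n + 1) j * C := by rw [rs_succ']
        · rw [hout j hj]
          simp only [abs_zero]
          exact mul_nonneg (rs_nonneg hQ.nonneg _ _) hC0
  have hCle : C ≤ (1 - ε) * C := by
    calc C = |w j₀| := hj₀
      _ ≤ rs Q m j₀ * C := key m j₀
      _ ≤ (1 - ε) * C := mul_le_mul_of_nonneg_right (hc j₀) hC0
  have hC0' : C ≤ 0 := by nlinarith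
  intro j
  have h1 : |w j| ≤ 0 := le_trans (hub j) hC0'
  exact abs_eq_zero.mp (le_antisymm h1 (abs_nonneg _))

end Stmt8Aux
namespace Stmt8Aux

variable {S : Type*} [Fintype S] [DecidableEq S]

/-- The snoc equivalence between pairs and paths. -/
def snocEquiv (n : ℕ) (S : Type*) : ((Fin (n + 1) → S) × S) ≃ (Fin (n + 2) → S) where
  toFun p := Fin.snoc p.1 p.2
  invFun x := (Fin.init x, x (Fin.last _))
  left_inv p := by simp only [Fin.init_snoc, Fin.snoc_last]
  right_inv x := by simp only [Fin.snoc_init_self]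

lemma snocEquiv_apply {n : ℕ} {S : Type*} (p : (Fin (n + 1) → S) × S) :
    snocEquiv n S p = (Fin.snoc p.1 p.2 : Fin (n + 2) → S) := rfl

open Classical in
/-- Generic path-sum = matrix power identity. -/
lemma pathTerm_eq (P : Matrix S S ℝ) (C : S → S → Prop) (i : S) :
    ∀ (n : ℕ) (f : S → ℝ),
      (∑ x ∈ Finset.univ.filter
        (fun (x : Fin (n + 1) → S) => x 0 = i ∧ ∀ t : Fin n, C (x t.castSucc) (x t.succ)),
        pathWt P x * f (x (Fin.last n)))
      = (((Matrix.of fun s j => if C s j then P s j else 0) ^ n).mulVec f) i := by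
  set Q : Matrix S S ℝ := Matrix.of fun s j => if C s j then P s j else 0 with hQdef
  intro n
  induction n with
  | zero =>
      intro f
      have hset : (Finset.univ.filter
          (fun (x : Fin 1 → S) => x 0 = i ∧ ∀ t : Fin 0, C (x t.castSucc) (x t.succ)))
          = {fun _ => i} := by
        ext x
        simp only [Finset.mem_filter, Finset.mem_univ, true_and, Finset.mem_singleton]
        constructor
        · rintro ⟨h0, -⟩
          funext t
          have ht : t = 0 := Subsingleton.elim t 0
          rw [ht, h0]
        · rintro rfl
          exact ⟨rfl, fun t => t.elim0⟩
      rw [hset, Finset.sum_singleton]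
      simp [pathWt, Matrix.one_mulVec]
  | succ n ih =>
      intro f
      have hsnoc0 : ∀ (y : Fin (n + 1) → S) (j : S), (Fin.snoc y j : Fin (n+2) → S) 0 = y 0 := by
        intro y j
        have h0 : (0 : Fin (n + 2)) = Fin.castSucc (0 : Fin (n+1)) := by
          simp [Fin.castSucc_zero]
        rw [h0, Fin.snoc_castSucc]
      have hcond : ∀ (y : Fin (n + 1) → S) (j : S),
          (((Fin.snoc y j : Fin (n+2) → S) 0 = i ∧
            ∀ t : Fin (n+1), C ((Fin.snoc y j : Fin (n+2) → S) t.castSucc)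
              ((Fin.snoc y j : Fin (n+2) → S) t.succ)))
          ↔ ((y 0 = i ∧ ∀ t : Fin n, C (y t.castSucc) (y t.succ)) ∧ C (y (Fin.last n)) j) := by
        intro y j
        rw [hsnoc0]
        constructor
        · rintro ⟨h0, hall⟩
          refine ⟨⟨h0, fun t => ?_⟩, ?_⟩
          · have h := hall t.castSucc
            rwa [Fin.succ_castSucc, Fin.snoc_castSucc, Fin.snoc_castSucc] at h
          · have h := hall (Fin.last n)
            rwa [Fin.succ_last, Fin.snoc_last, Fin.snoc_castSucc] at h
        · rintro ⟨⟨h0, hall⟩, hlast⟩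
          refine ⟨h0, fun t => ?_⟩
          refine Fin.lastCases ?_ (fun s => ?_) t
          · rwa [Fin.succ_last, Fin.snoc_last, Fin.snoc_castSucc]
          · rw [Fin.succ_castSucc, Fin.snoc_castSucc, Fin.snoc_castSucc]
            exact hall s
      have hwt : ∀ (y : Fin (n + 1) → S) (j : S),
          pathWt P (Fin.snoc y j : Fin (n+2) → S)
            = pathWt P y * P (y (Fin.last n)) j := by
        intro y j
        rw [pathWt, pathWt, Fin.prod_univ_castSucc]
        congr 1
        · refine Finset.prod_congr rfl fun s _ => ?_
          rw [Fin.succ_castSucc, Fin.snoc_castSucc, Fin.snoc_castSucc]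
        · rw [Fin.succ_last, Fin.snoc_last, Fin.snoc_castSucc]
      have step1 : (∑ x ∈ Finset.univ.filter
            (fun (x : Fin (n + 2) → S) => x 0 = i ∧
              ∀ t : Fin (n+1), C (x t.castSucc) (x t.succ)),
            pathWt P x * f (x (Fin.last (n+1))))
          = ∑ p ∈ Finset.univ.filter
              (fun p : (Fin (n + 1) → S) × S =>
                (p.1 0 = i ∧ ∀ t : Fin n, C (p.1 t.castSucc) (p.1 t.succ))
                ∧ C (p.1 (Fin.last n)) p.2),
              pathWt P p.1 * (P (p.1 (Fin.last n)) p.2 * f p.2) := by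
        have he : ∀ p : (Fin (n+1) → S) × S, snocEquiv n S p = (Fin.snoc p.1 p.2 : Fin (n+2) → S) :=
          snocEquiv_apply
        refine (Finset.sum_equiv (snocEquiv n S) ?_ ?_).symm
        · intro p
          simp only [Finset.mem_filter, Finset.mem_univ, true_and, he]
          exact (hcond p.1 p.2).symm
        · intro p _
          rw [he]
          rw [hwt, Fin.snoc_last, mul_assoc]
      rw [step1]
      have step2 : (∑ p ∈ Finset.univ.filter
              (fun p : (Fin (n + 1) → S) × S =>
                (p.1 0 = i ∧ ∀ t : Fin n, C (p.1 t.castSucc) (p.1 t.succ))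
                ∧ C (p.1 (Fin.last n)) p.2),
              pathWt P p.1 * (P (p.1 (Fin.last n)) p.2 * f p.2))
          = ∑ y ∈ Finset.univ.filter
              (fun (y : Fin (n + 1) → S) => y 0 = i ∧ ∀ t : Fin n, C (y t.castSucc) (y t.succ)),
              pathWt P y * ((Q.mulVec f) (y (Fin.last n))) := by
        rw [Finset.sum_filter, Fintype.sum_prod_type, Finset.sum_filter]
        refine Finset.sum_congr rfl fun y _ => ?_
        by_cases hy : y 0 = i ∧ ∀ t : Fin n, C (y t.castSucc) (y t.succ)
        · rw [if_pos hy]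
          have : ∀ j : S, (if (y 0 = i ∧ ∀ t : Fin n, C (y t.castSucc) (y t.succ))
                ∧ C (y (Fin.last n)) j
              then pathWt P y * (P (y (Fin.last n)) j * f j) else 0)
              = pathWt P y * (Q (y (Fin.last n)) j * f j) := by
            intro j
            by_cases hj : C (y (Fin.last n)) j
            · rw [if_pos ⟨hy, hj⟩]
              congr 2
              show P (y (Fin.last n)) j = Q (y (Fin.last n)) j
              rw [hQdef]
              simp [Matrix.of_apply, if_pos hj]
            · rw [if_neg (by tauto)]
              have : Q (y (Fin.last n)) j = 0 := by
                rw [hQdef]; simp [Matrix.of_apply, if_neg hj]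
              rw [this, zero_mul, mul_zero]
          rw [Finset.sum_congr rfl fun j _ => this j, ← Finset.mul_sum]
          congr 1
        · rw [if_neg hy]
          exact Finset.sum_eq_zero fun j _ => if_neg (by tauto)
      rw [step2, ih (Q.mulVec f), Matrix.mulVec_mulVec, ← pow_succ]

end Stmt8Aux
namespace Stmt8Aux

variable {S : Type*} [Fintype S] [DecidableEq S] (T : SFTree S)

lemma iterate_parent_root (n : ℕ) : T.parent^[n] T.root = T.root := by
  induction n with
  | zero => rfl
  | succ n ih => rw [Function.iterate_succ_apply', ih, T.parent_root]

lemma cycle_eq_root {u : S} {c : ℕ} (hc : 0 < c) (h : T.parent^[c] u = u) : u = T.root := by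
  obtain ⟨m, hm⟩ := T.reaches_root u
  have hcyc : ∀ k : ℕ, T.parent^[k * c] u = u := by
    intro k
    induction k with
    | zero => simp
    | succ k ih => rw [Nat.succ_mul, Function.iterate_add_apply, h, ih]
  have hk : m ≤ (m + 1) * c := by nlinarith
  have : T.parent^[(m + 1) * c] u = T.parent^[(m + 1) * c - m] (T.parent^[m] u) := by
    rw [← Function.iterate_add_apply]
    congr 1
    omega
  rw [hcyc (m + 1), hm, iterate_parent_root] at this
  exact this

lemma ancestor_antisymm {u v : S} {a b : ℕ} (h1 : T.parent^[a] u = v)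
    (h2 : T.parent^[b] v = u) : u = v := by
  rcases Nat.eq_zero_or_pos (a + b) with h | h
  · have : a = 0 := by omega
    rw [← h1, this]; rfl
  · have hcyc : T.parent^[b + a] u = u := by
      rw [Function.iterate_add_apply, h1, h2]
    have hu : u = T.root := cycle_eq_root T (by omega) hcyc
    have hv : v = T.root := by rw [← h1, hu, iterate_parent_root]
    rw [hu, hv]

lemma mem_subtree {i j : S} : j ∈ T.subtree i ↔ ∃ n : ℕ, T.parent^[n] j = i := by
  simp [SFTree.subtree]

lemma mem_desc {i j : S} : j ∈ T.desc i ↔ j ≠ i ∧ ∃ n : ℕ, T.parent^[n] j = i := by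
  simp [SFTree.desc]

lemma self_mem_subtree (i : S) : i ∈ T.subtree i := (mem_subtree T).mpr ⟨0, rfl⟩

lemma subtree_trans {i j k : S} (hj : j ∈ T.subtree i) (hk : k ∈ T.subtree j) :
    k ∈ T.subtree i := by
  obtain ⟨n, hn⟩ := (mem_subtree T).mp hj
  obtain ⟨m, hm⟩ := (mem_subtree T).mp hk
  exact (mem_subtree T).mpr ⟨n + m, by rw [Function.iterate_add_apply, hm, hn]⟩

lemma subtree_antisymm {i j : S} (hj : j ∈ T.subtree i) (hi : i ∈ T.subtree j) : i = j := by
  obtain ⟨n, hn⟩ := (mem_subtree T).mp hj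
  obtain ⟨m, hm⟩ := (mem_subtree T).mp hi
  exact (ancestor_antisymm T hm hn).symm ▸ (ancestor_antisymm T hm hn) ▸ rfl

lemma root_mem_subtree_iff {i : S} : T.root ∈ T.subtree i ↔ i = T.root := by
  constructor
  · intro h
    obtain ⟨n, hn⟩ := (mem_subtree T).mp h
    rw [iterate_parent_root] at hn
    exact hn.symm
  · rintro rfl; exact self_mem_subtree T _

lemma ne_root_of_mem_subtree {i j : S} (hi : i ≠ T.root) (hj : j ∈ T.subtree i) :
    j ≠ T.root := by
  rintro rfl
  exact hi ((root_mem_subtree_iff T).mp hj)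

lemma parent_mem_subtree_of_ne {i j : S} (hj : j ∈ T.subtree i) (hne : j ≠ i) :
    T.parent j ∈ T.subtree i := by
  obtain ⟨n, hn⟩ := (mem_subtree T).mp hj
  cases n with
  | zero => exact absurd hn hne
  | succ n =>
      refine (mem_subtree T).mpr ⟨n, ?_⟩
      rw [← hn, Function.iterate_succ_apply]

lemma parent_not_mem_subtree {j : S} (hj : j ≠ T.root) : T.parent j ∉ T.subtree j := by
  intro h
  obtain ⟨n, hn⟩ := (mem_subtree T).mp h
  have : T.parent^[n + 1] j = j := by rw [Function.iterate_succ_apply, hn]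
  exact hj (cycle_eq_root T (Nat.succ_pos n) this)

lemma comparable_of_mem_subtree_both {a b k : S} (ha : k ∈ T.subtree a)
    (hb : k ∈ T.subtree b) : a ∈ T.subtree b ∨ b ∈ T.subtree a := by
  obtain ⟨n, hn⟩ := (mem_subtree T).mp ha
  obtain ⟨m, hm⟩ := (mem_subtree T).mp hb
  rcases le_total n m with h | h
  · left
    refine (mem_subtree T).mpr ⟨m - n, ?_⟩
    rw [← hn, ← Function.iterate_add_apply, show m - n + n = m by omega, hm]
  · right
    refine (mem_subtree T).mpr ⟨n - m, ?_⟩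
    rw [← hm, ← Function.iterate_add_apply, show n - m + m = n by omega, hn]

lemma subtree_subset {i j : S} (hj : j ∈ T.subtree i) : T.subtree j ⊆ T.subtree i :=
  fun k hk => subtree_trans T hj hk

end Stmt8Aux
namespace Stmt8Aux

variable {S A : Type*} [Fintype S] [DecidableEq S] [Nonempty S]

section Matrices

variable (M : MDP S A) (d : S → A)

/-- `P` with column `z` deleted. -/
def Nmat (z : S) : Matrix S S ℝ :=
  Matrix.of fun s j => if j ≠ z then M.Pmat d s j else 0

/-- `P` with transitions into `z` from outside `z` deleted. -/
def Rmat (z : S) : Matrix S S ℝ :=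
  Matrix.of fun s j => if ¬(s ≠ z ∧ j = z) then M.Pmat d s j else 0

variable {M d}

lemma Pmat_nonneg : ∀ i j, 0 ≤ M.Pmat d i j := fun i j => M.p_nonneg i (d i) j

lemma Pmat_rowsum (i : S) : ∑ j, M.Pmat d i j = 1 := M.p_sum_one i (d i)

lemma rs_Pmat (n : ℕ) (i : S) : rs (M.Pmat d) n i = 1 := by
  induction n generalizing i with
  | zero => exact rs_zero _ i
  | succ n ih =>
      rw [rs_succ']
      calc (∑ k, M.Pmat d i k * rs (M.Pmat d) n k) = ∑ k, M.Pmat d i k := by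
            exact Finset.sum_congr rfl fun k _ => by rw [ih k, mul_one]
        _ = 1 := Pmat_rowsum i

lemma Nmat_nonneg (z : S) : ∀ i j, 0 ≤ Nmat M d z i j := by
  intro i j
  rw [Nmat, Matrix.of_apply]
  split
  · exact Pmat_nonneg i j
  · exact le_rfl

lemma Nmat_le_Pmat (z : S) : ∀ i j, Nmat M d z i j ≤ M.Pmat d i j := by
  intro i j
  rw [Nmat, Matrix.of_apply]
  split
  · exact le_rfl
  · exact Pmat_nonneg i j

lemma Rmat_nonneg (z : S) : ∀ i j, 0 ≤ Rmat M d z i j := by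
  intro i j
  rw [Rmat, Matrix.of_apply]
  split
  · exact Pmat_nonneg i j
  · exact le_rfl

lemma Rmat_le_Pmat (z : S) : ∀ i j, Rmat M d z i j ≤ M.Pmat d i j := by
  intro i j
  rw [Rmat, Matrix.of_apply]
  split
  · exact le_rfl
  · exact Pmat_nonneg i j

lemma pow_le_pow_of_le {Q Q' : Matrix S S ℝ} (h0 : ∀ i j, 0 ≤ Q i j)
    (h0' : ∀ i j, 0 ≤ Q' i j) (hle : ∀ i j, Q i j ≤ Q' i j) (n : ℕ) :
    ∀ i j, (Q ^ n) i j ≤ (Q' ^ n) i j := by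
  induction n with
  | zero => intro i j; simp
  | succ n ih =>
      intro i j
      rw [pow_succ, pow_succ, Matrix.mul_apply, Matrix.mul_apply]
      refine Finset.sum_le_sum fun k _ => ?_
      exact mul_le_mul (ih i k) (hle k j) (h0 k j) (pow_nonneg' h0' n i k)

lemma rs_le_one_of_le_Pmat {Q : Matrix S S ℝ} (h0 : ∀ i j, 0 ≤ Q i j)
    (hle : ∀ i j, Q i j ≤ M.Pmat d i j) (n : ℕ) (i : S) : rs Q n i ≤ 1 := by
  calc rs Q n i ≤ rs (M.Pmat d) n i :=
        Finset.sum_le_sum fun j _ => pow_le_pow_of_le h0 Pmat_nonneg hle n i j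
    _ = 1 := rs_Pmat n i

lemma Nmat_pow_col (z : S) (n : ℕ) (i : S) : ((Nmat M d z) ^ (n + 1)) i z = 0 := by
  rw [pow_succ, Matrix.mul_apply]
  refine Finset.sum_eq_zero fun k _ => ?_
  have : Nmat M d z k z = 0 := by rw [Nmat, Matrix.of_apply, if_neg (by simp)]
  rw [this, mul_zero]

lemma rs_Nmat_le (z : S) (n : ℕ) (i : S) :
    rs (Nmat M d z) (n + 1) i ≤ 1 - (M.Pmat d ^ (n + 1)) i z := by
  have h1 : rs (Nmat M d z) (n + 1) i
      = ∑ j ∈ Finset.univ.erase z, ((Nmat M d z) ^ (n + 1)) i j := by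
    rw [rs, ← Finset.add_sum_erase _ _ (Finset.mem_univ z), Nmat_pow_col, zero_add]
  have h2 : (M.Pmat d ^ (n + 1)) i z + ∑ j ∈ Finset.univ.erase z, (M.Pmat d ^ (n + 1)) i j
      = 1 := by
    rw [Finset.add_sum_erase _ _ (Finset.mem_univ z)]
    exact rs_Pmat (n + 1) i
  have h3 : ∑ j ∈ Finset.univ.erase z, ((Nmat M d z) ^ (n + 1)) i j
      ≤ ∑ j ∈ Finset.univ.erase z, (M.Pmat d ^ (n + 1)) i j :=
    Finset.sum_le_sum fun j _ =>
      pow_le_pow_of_le (Nmat_nonneg z) Pmat_nonneg (Nmat_le_Pmat z) (n + 1) i j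
  rw [h1]
  linarith

/-- Contraction certificate for `N`, from irreducibility. -/
lemma contr_Nmat (hirr : MatIrreducible (M.Pmat d)) (z : S) :
    ∃ m ε, 0 < m ∧ 0 < ε ∧ ε ≤ 1 ∧ (∀ i, rs (Nmat M d z) m i ≤ 1 - ε) ∧
      Contr (Nmat M d z) := by
  have hrs1 : ∀ i, rs (Nmat M d z) 1 i ≤ 1 :=
    rs_le_one_of_le_Pmat (Nmat_nonneg z) (Nmat_le_Pmat z) 1
  have hch : ∀ i : S, ∃ n : ℕ, 0 < n ∧ 0 < (M.Pmat d ^ n) i z := fun i => hirr i z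
  choose nf hnf1 hnf2 using hch
  set m : ℕ := (Finset.univ.sup nf) + 1 with hm
  have hm0 : 0 < m := Nat.succ_pos _
  have hlt : ∀ i, rs (Nmat M d z) m i < 1 := by
    intro i
    have hle : nf i ≤ m := le_trans (Finset.le_sup (Finset.mem_univ i)) (Nat.le_succ _)
    have h1 : rs (Nmat M d z) m i ≤ rs (Nmat M d z) (nf i) i :=
      rs_antitone (Nmat_nonneg z) hrs1 hle i
    obtain ⟨k, hk⟩ : ∃ k, nf i = k + 1 := ⟨nf i - 1, by have := hnf1 i; omega⟩
    have h2 : rs (Nmat M d z) (nf i) i ≤ 1 - (M.Pmat d ^ (nf i)) i z := by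
      rw [hk]; exact rs_Nmat_le z k i
    have := hnf2 i
    linarith
  set ε : ℝ := Finset.univ.inf' Finset.univ_nonempty (fun i => 1 - rs (Nmat M d z) m i)
    with hε
  have hε0 : 0 < ε := by
    rw [hε, Finset.lt_inf'_iff]
    intro i _
    linarith [hlt i]
  have hbd : ∀ i, rs (Nmat M d z) m i ≤ 1 - ε := by
    intro i
    have : ε ≤ 1 - rs (Nmat M d z) m i :=
      Finset.inf'_le _ (Finset.mem_univ i)
    linarith
  have hε1 : ε ≤ 1 := by
    have := hbd (Classical.arbitrary S)
    have := rs_nonneg (Nmat_nonneg (M := M) (d := d) z) m (Classical.arbitrary S)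
    linarith
  exact ⟨m, ε, hm0, hε0, hε1, hbd,
    ⟨Nmat_nonneg z, hrs1, ⟨m, ε, hm0, hε0, hε1, hbd⟩⟩⟩

lemma Rmat_row_ne (z : S) {i : S} (hi : i ≠ z) (j : S) :
    Rmat M d z i j = Nmat M d z i j := by
  rw [Rmat, Nmat, Matrix.of_apply, Matrix.of_apply]
  by_cases hj : j = z
  · rw [if_neg (by tauto), if_neg (by tauto)]
  · rw [if_pos (by tauto), if_pos (by tauto)]

lemma Rmat_row_z (z : S) (j : S) : Rmat M d z z j = M.Pmat d z j := by
  rw [Rmat, Matrix.of_apply, if_pos (by tauto)]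

lemma Rmat_pow_ne (z : S) (n : ℕ) : ∀ i, i ≠ z → ∀ j,
    ((Rmat M d z) ^ n) i j = if j = z then 0 else ((Nmat M d z) ^ n) i j := by
  induction n with
  | zero =>
      intro i hi j
      by_cases hj : j = z
      · subst hj
        simp [Matrix.one_apply, hi]
      · simp [Matrix.one_apply, hj]
  | succ n ih =>
      intro i hi j
      rw [pow_succ', pow_succ', Matrix.mul_apply, Matrix.mul_apply]
      have hterm : ∀ k, Rmat M d z i k * ((Rmat M d z) ^ n) k j
          = Nmat M d z i k * (if j = z then 0 else ((Nmat M d z) ^ n) k j) := by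
        intro k
        by_cases hk : k = z
        · have h1 : Rmat M d z i k = 0 := by
            rw [Rmat, Matrix.of_apply, if_neg (by simp [hi, hk])]
          have h2 : Nmat M d z i k = 0 := by
            rw [Nmat, Matrix.of_apply, if_neg (by simp [hk])]
          rw [h1, h2, zero_mul, zero_mul]
        · rw [Rmat_row_ne z hi, ih k hk j]
      rw [Finset.sum_congr rfl fun k _ => hterm k]
      by_cases hj : j = z
      · rw [if_pos hj]
        exact Finset.sum_eq_zero fun k _ => by rw [if_pos hj, mul_zero]
      · rw [if_neg hj]
        exact Finset.sum_congr rfl fun k _ => by rw [if_neg hj]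

lemma rs_Rmat_ne (z : S) (n : ℕ) {i : S} (hi : i ≠ z) :
    rs (Rmat M d z) n i = ∑ j ∈ Finset.univ.erase z, ((Nmat M d z) ^ n) i j := by
  rw [rs, ← Finset.add_sum_erase _ _ (Finset.mem_univ z)]
  rw [Rmat_pow_ne z n i hi z, if_pos rfl, zero_add]
  exact Finset.sum_congr rfl fun j hj =>
    by rw [Rmat_pow_ne z n i hi j, if_neg (Finset.ne_of_mem_erase hj)]

/-- Contraction certificate for `R` at the root. -/
lemma contr_Rmat (hirr : MatIrreducible (M.Pmat d)) {z : S}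
    (hz : M.Pmat d z z < 1) : Contr (Rmat M d z) := by
  obtain ⟨m, ε, hm0, hε0, hε1, hbd, -⟩ := contr_Nmat (M := M) (d := d) hirr z
  have hrs1R : ∀ i, rs (Rmat M d z) 1 i ≤ 1 :=
    rs_le_one_of_le_Pmat (Rmat_nonneg z) (Rmat_le_Pmat z) 1
  refine ⟨Rmat_nonneg z, hrs1R, m + 1, ε * (1 - M.Pmat d z z), Nat.succ_pos m, ?_, ?_, ?_⟩
  · have h0 : 0 ≤ M.Pmat d z z := Pmat_nonneg z z
    nlinarith
  · have h0 : 0 ≤ M.Pmat d z z := Pmat_nonneg z z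
    nlinarith
  · -- the row bounds
    have hNz : ∀ k, k ≠ z → rs (Rmat M d z) m k ≤ 1 - ε := by
      intro k hk
      rw [rs_Rmat_ne z m hk]
      calc (∑ j ∈ Finset.univ.erase z, ((Nmat M d z) ^ m) k j)
          ≤ ∑ j, ((Nmat M d z) ^ m) k j :=
            Finset.sum_le_sum_of_subset_of_nonneg (Finset.erase_subset _ _)
              (fun j _ _ => pow_nonneg' (Nmat_nonneg z) m k j)
        _ ≤ 1 - ε := hbd k
    intro i
    by_cases hi : i = z
    · rw [hi, rs_succ']
      have hsplit : (∑ k, Rmat M d z z k * rs (Rmat M d z) m k)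
          = M.Pmat d z z * rs (Rmat M d z) m z
            + ∑ k ∈ Finset.univ.erase z, M.Pmat d z k * rs (Rmat M d z) m k := by
        rw [← Finset.add_sum_erase _ _ (Finset.mem_univ z), Rmat_row_z]
        congr 1
        exact Finset.sum_congr rfl fun k _ => by rw [Rmat_row_z]
      rw [hsplit]
      have h1 : rs (Rmat M d z) m z ≤ 1 :=
        rs_le_one_of_le_Pmat (Rmat_nonneg z) (Rmat_le_Pmat z) m z
      have h1' : 0 ≤ rs (Rmat M d z) m z := rs_nonneg (Rmat_nonneg z) m z
      have h2 : ∑ k ∈ Finset.univ.erase z, M.Pmat d z k * rs (Rmat M d z) m k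
          ≤ (1 - M.Pmat d z z) * (1 - ε) := by
        have hadd := Finset.add_sum_erase Finset.univ (fun k => M.Pmat d z k)
          (Finset.mem_univ z)
        have hrow := Pmat_rowsum (M := M) (d := d) z
        have hsum : ∑ k ∈ Finset.univ.erase z, M.Pmat d z k = 1 - M.Pmat d z z := by
          rw [← hadd] at hrow
          linarith
        calc (∑ k ∈ Finset.univ.erase z, M.Pmat d z k * rs (Rmat M d z) m k)
            ≤ ∑ k ∈ Finset.univ.erase z, M.Pmat d z k * (1 - ε) := by
              refine Finset.sum_le_sum fun k hk => ?_
              exact mul_le_mul_of_nonneg_left (hNz k (Finset.ne_of_mem_erase hk))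
                (Pmat_nonneg z k)
          _ = (1 - M.Pmat d z z) * (1 - ε) := by rw [← Finset.sum_mul, hsum]
      have h3 : 0 ≤ M.Pmat d z z := Pmat_nonneg z z
      nlinarith
    · have h1 : rs (Rmat M d z) (m + 1) i ≤ rs (Rmat M d z) m i :=
        rs_antitone (Rmat_nonneg z) hrs1R (Nat.le_succ m) i
      have h2 := hNz i hi
      have h3 : 0 ≤ M.Pmat d z z := Pmat_nonneg z z
      nlinarith

end Matrices

end Stmt8Aux
namespace Stmt8Aux

variable {S A : Type*} [Fintype S] [DecidableEq S] [Nonempty S]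

open Classical in
/-- The ancestors of `j` (inclusive) that lie in `W`. -/
noncomputable def chain (T : SFTree S) (W : Finset S) (j : S) : Finset S :=
  W.filter fun r => ∃ n : ℕ, T.parent^[n] j = r

lemma mem_chain {T : SFTree S} {W : Finset S} {j r : S} :
    r ∈ chain T W j ↔ r ∈ W ∧ ∃ n : ℕ, T.parent^[n] j = r := by
  simp [chain]

lemma mem_chain' {T : SFTree S} {W : Finset S} {j r : S} :
    r ∈ chain T W j ↔ r ∈ W ∧ j ∈ T.subtree r := by
  rw [mem_chain, mem_subtree]

variable {T : SFTree S} {M : MDP S A} {d : S → A}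

lemma ptail_eq_sum (j r : S) :
    M.ptail T j (d j) r = ∑ k ∈ T.subtree r, M.Pmat d j k := rfl

lemma ptail_nonneg (j r : S) : 0 ≤ M.ptail T j (d j) r :=
  Finset.sum_nonneg fun k _ => M.p_nonneg j (d j) k

lemma support_skipfree (hsf : M.IsSkipFree T) {j : S} (hj : j ≠ T.root) {k : S}
    (hP : M.Pmat d j k ≠ 0) : k = T.parent j ∨ k ∈ T.subtree j :=
  hsf j hj (d j) k hP

lemma ptail_self (hsf : M.IsSkipFree T) {j : S} (hj : j ≠ T.root) :
    M.ptail T j (d j) j = 1 - M.Pmat d j (T.parent j) := by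
  rw [ptail_eq_sum]
  have h1 : ∑ k ∈ T.subtree j, M.Pmat d j k
      = ∑ k ∈ Finset.univ.erase (T.parent j), M.Pmat d j k := by
    refine Finset.sum_subset ?_ ?_
    · intro k hk
      refine Finset.mem_erase.mpr ⟨?_, Finset.mem_univ k⟩
      rintro rfl
      exact parent_not_mem_subtree T hj hk
    · intro k hk' hk
      by_contra hP
      rcases support_skipfree hsf hj hP with h | h
      · exact (Finset.mem_erase.mp hk').1 h
      · exact hk h
  have h2 : M.Pmat d j (T.parent j) + ∑ k ∈ Finset.univ.erase (T.parent j), M.Pmat d j k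
      = 1 := by
    rw [Finset.add_sum_erase _ _ (Finset.mem_univ (T.parent j))]
    exact Pmat_rowsum j
  rw [h1]
  linarith

lemma ptail_one (hsf : M.IsSkipFree T) {j r : S} (hj : j ≠ T.root)
    (hr1 : j ∈ T.subtree r) (hr2 : r ≠ j) : M.ptail T j (d j) r = 1 := by
  rw [ptail_eq_sum]
  have h1 : ∑ k ∈ T.subtree r, M.Pmat d j k = ∑ k, M.Pmat d j k := by
    refine Finset.sum_subset (Finset.subset_univ _) ?_
    intro k _ hk
    by_contra hP
    rcases support_skipfree hsf hj hP with h | h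
    · subst h
      exact hk (parent_mem_subtree_of_ne T hr1 (fun hh => hr2 hh.symm))
    · exact hk (subtree_subset T hr1 h)
  rw [h1]
  exact Pmat_rowsum j

lemma ptail_zero (hsf : M.IsSkipFree T) {j r : S} (hj : j ≠ T.root)
    (h1 : r ∉ T.subtree j) (h2 : j ∉ T.subtree r) : M.ptail T j (d j) r = 0 := by
  rw [ptail_eq_sum]
  refine Finset.sum_eq_zero fun k hk => ?_
  by_contra hP
  rcases support_skipfree hsf hj hP with h | h
  · subst h
    obtain ⟨n, hn⟩ := (mem_subtree T).mp hk
    exact h2 ((mem_subtree T).mpr ⟨n + 1, by rw [Function.iterate_succ_apply, hn]⟩)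
  · rcases comparable_of_mem_subtree_both T h hk with hc | hc
    · exact h2 hc
    · exact h1 hc

/-- Exchange lemma: summing the candidate solution against a row of `N`. -/
lemma exchangeX (W : Finset S) (z : S) (y : S → ℝ)
    (hW_sub : ∀ r ∈ W, T.subtree r ⊆ W) (hz : ∀ r ∈ W, z ∉ T.subtree r) (j : S) :
    ∑ k ∈ W, Nmat M d z j k * (∑ r ∈ chain T W k, y r)
      = ∑ r ∈ W, M.ptail T j (d j) r * y r := by
  have h1 : ∑ k ∈ W, Nmat M d z j k * (∑ r ∈ chain T W k, y r)
      = ∑ k ∈ W, ∑ r ∈ chain T W k, Nmat M d z j k * y r := by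
    exact Finset.sum_congr rfl fun k _ => Finset.mul_sum _ _ _
  have h2 : ∑ k ∈ W, ∑ r ∈ chain T W k, Nmat M d z j k * y r
      = ∑ r ∈ W, ∑ k ∈ T.subtree r, Nmat M d z j k * y r := by
    refine Finset.sum_comm' ?_
    intro k r
    constructor
    · rintro ⟨hkW, hr⟩
      obtain ⟨hrW, hk⟩ := mem_chain'.mp hr
      exact ⟨hk, hrW⟩
    · rintro ⟨hk, hrW⟩
      exact ⟨hW_sub r hrW hk, mem_chain'.mpr ⟨hrW, hk⟩⟩
  have h3 : ∀ r ∈ W, ∑ k ∈ T.subtree r, Nmat M d z j k * y r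
      = M.ptail T j (d j) r * y r := by
    intro r hr
    rw [← Finset.sum_mul, ptail_eq_sum]
    congr 1
    refine Finset.sum_congr rfl fun k hk => ?_
    have hkz : k ≠ z := by
      rintro rfl
      exact hz r hr hk
    rw [Nmat, Matrix.of_apply, if_pos hkz]
  rw [h1, h2]
  exact Finset.sum_congr rfl h3

/-- The key verification: the candidate chain-sums satisfy the `N`-system on `W`. -/
lemma claimV (hsf : M.IsSkipFree T) (W : Finset S) (z : S) (f y : S → ℝ)
    (hroot : T.root ∉ W)
    (hW_sub : ∀ r ∈ W, T.subtree r ⊆ W)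
    (hz : ∀ r ∈ W, z ∉ T.subtree r)
    (heq : ∀ j ∈ W, M.Pmat d j (T.parent j) * y j
      = f j + ∑ r ∈ T.desc j, M.ptail T j (d j) r * y r) :
    ∀ j ∈ W, (∑ r ∈ chain T W j, y r)
      = f j + ∑ k, Nmat M d z j k * (if k ∈ W then (∑ r ∈ chain T W k, y r) else 0) := by
  intro j hj
  have hjroot : j ≠ T.root := by rintro rfl; exact hroot hj
  have hA : (∑ k, Nmat M d z j k * (if k ∈ W then (∑ r ∈ chain T W k, y r) else 0))
      = ∑ k ∈ W, Nmat M d z j k * (∑ r ∈ chain T W k, y r) := by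
    rw [← Finset.sum_subset (Finset.subset_univ W)
      (fun k _ hk => by rw [if_neg hk, mul_zero])]
    exact Finset.sum_congr rfl fun k hk => by rw [if_pos hk]
  rw [hA, exchangeX W z y hW_sub hz j]
  -- now split the sum over W
  set g : S → ℝ := fun r => M.ptail T j (d j) r * y r with hg
  have hjCh : j ∈ chain T W j := mem_chain'.mpr ⟨hj, self_mem_subtree T j⟩
  have hDW : T.desc j ⊆ W := by
    intro r hr
    obtain ⟨hne, hsub⟩ := (mem_desc T).mp hr
    exact hW_sub j hj ((mem_subtree T).mpr hsub)
  have hDCh : Disjoint (T.desc j) (chain T W j) := by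
    rw [Finset.disjoint_left]
    intro r hr hr'
    obtain ⟨hne, hsub⟩ := (mem_desc T).mp hr
    obtain ⟨-, hj'⟩ := mem_chain'.mp hr'
    exact hne (subtree_antisymm T ((mem_subtree T).mpr hsub) hj' ▸ rfl)
  have hsplit : ∑ r ∈ W, g r = ∑ r ∈ T.desc j, g r + ∑ r ∈ chain T W j, g r := by
    rw [← Finset.sum_union hDCh]
    refine (Finset.sum_subset ?_ ?_).symm
    · refine Finset.union_subset hDW ?_
      intro r hr
      exact (mem_chain.mp hr).1
    · intro r hrW hr
      rw [Finset.mem_union] at hr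
      push_neg at hr
      obtain ⟨hr1, hr2⟩ := hr
      have hjr : j ∉ T.subtree r := fun hc => hr2 (mem_chain'.mpr ⟨hrW, hc⟩)
      have hrj : r ∉ T.subtree j := by
        intro hc
        refine hr1 ((mem_desc T).mpr ⟨?_, (mem_subtree T).mp hc⟩)
        rintro rfl
        exact hjr (self_mem_subtree T r)
      rw [hg]
      simp only []
      rw [ptail_zero hsf hjroot hrj hjr, zero_mul]
  have hCh : ∑ r ∈ chain T W j, g r
      = (1 - M.Pmat d j (T.parent j)) * y j + ∑ r ∈ (chain T W j).erase j, y r := by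
    rw [← Finset.add_sum_erase _ _ hjCh]
    congr 1
    · rw [hg]; simp only []; rw [ptail_self hsf hjroot]
    · refine Finset.sum_congr rfl fun r hr => ?_
      obtain ⟨hrj, hrCh⟩ := Finset.mem_erase.mp hr
      obtain ⟨-, hjr⟩ := mem_chain'.mp hrCh
      rw [hg]; simp only []
      rw [ptail_one hsf hjroot hjr hrj, one_mul]
  have hEq := heq j hj
  have hLHS : ∑ r ∈ chain T W j, y r = y j + ∑ r ∈ (chain T W j).erase j, y r :=
    (Finset.add_sum_erase _ _ hjCh).symm
  rw [hLHS, hsplit, hCh]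
  have : ∑ r ∈ T.desc j, g r = ∑ r ∈ T.desc j, M.ptail T j (d j) r * y r := rfl
  rw [this]
  linarith

/-- Identification of `qsum N f` with the candidate chain-sums on `W`. -/
lemma mainW (hsf : M.IsSkipFree T) (W : Finset S) (z : S) (f y : S → ℝ)
    (hroot : T.root ∉ W)
    (hW_sub : ∀ r ∈ W, T.subtree r ⊆ W)
    (hz : ∀ r ∈ W, z ∉ T.subtree r)
    (hW_par : ∀ j ∈ W, T.parent j = z ∨ T.parent j ∈ W)
    (heq : ∀ j ∈ W, M.Pmat d j (T.parent j) * y j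
      = f j + ∑ r ∈ T.desc j, M.ptail T j (d j) r * y r)
    (hcontr : Contr (Nmat M d z)) :
    ∀ j ∈ W, qsum (Nmat M d z) f j = ∑ r ∈ chain T W j, y r := by
  have hcl : ∀ j ∈ W, ∀ k, Nmat M d z j k ≠ 0 → k ∈ W := by
    intro j hj k hk
    have hjroot : j ≠ T.root := by rintro rfl; exact hroot hj
    have hkz : k ≠ z ∧ M.Pmat d j k ≠ 0 := by
      by_contra hc
      push_neg at hc
      apply hk
      rw [Nmat, Matrix.of_apply]
      by_cases h : k ≠ z
      · rw [if_pos h]; exact hc h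
      · rw [if_neg h]
    rcases support_skipfree hsf hjroot hkz.2 with h | h
    · rcases hW_par j hj with hp | hp
      · exact absurd (h.trans hp) hkz.1
      · exact h ▸ hp
    · exact hW_sub j hj h
  set u : S → ℝ := qsum (Nmat M d z) f with hu
  set w : S → ℝ := fun j => if j ∈ W then u j - ∑ r ∈ chain T W j, y r else 0 with hw
  have hfix : ∀ j, u j = f j + ((Nmat M d z).mulVec u) j := qsum_fixed hcontr f
  have hV := claimV hsf W z f y hroot hW_sub hz heq
  have hharm : ∀ j ∈ W, w j = ((Nmat M d z).mulVec w) j := by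
    intro j hj
    have h1 : w j = u j - ∑ r ∈ chain T W j, y r := by rw [hw]; simp only [if_pos hj]
    have h2 : ((Nmat M d z).mulVec w) j
        = ((Nmat M d z).mulVec u) j
          - ∑ k, Nmat M d z j k * (if k ∈ W then (∑ r ∈ chain T W k, y r) else 0) := by
      rw [mulVec_apply, mulVec_apply, ← Finset.sum_sub_distrib]
      refine Finset.sum_congr rfl fun k _ => ?_
      by_cases hk : k ∈ W
      · rw [hw]; simp only [if_pos hk]; ring
      · have hNk : Nmat M d z j k = 0 := by
          by_contra hc
          exact hk (hcl j hj k hc)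
        rw [hw]; simp only [if_neg hk]
        rw [hNk]; ring
    rw [h1, h2, hfix j, hV j hj]
    ring
  have hzero := harmonic_zero hcontr hharm (fun j hj => by rw [hw]; simp only [if_neg hj])
  intro j hj
  have := hzero j
  rw [hw] at this
  simp only [if_pos hj] at this
  linarith
end Stmt8Aux
namespace Stmt8Aux

variable {S A : Type*} [Fintype S] [DecidableEq S] [Nonempty S]
variable {T : SFTree S} {M : MDP S A} {d : S → A}

lemma passTerm_eq_mulVec (i z : S) (f : S → ℝ) (n : ℕ) :
    passTerm (M.Pmat d) i z f n = (((Nmat M d z) ^ n).mulVec f) i := by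
  unfold passTerm Nmat
  have h := pathTerm_eq (M.Pmat d) (fun _ j => j ≠ z) i n f
  convert h using 3
  ext s j
  by_cases hc : j ≠ z <;> simp [hc]

lemma retTerm_eq_mulVec (z : S) (f : S → ℝ) (n : ℕ) :
    retTerm (M.Pmat d) z f n = (((Rmat M d z) ^ n).mulVec f) z := by
  unfold retTerm Rmat
  have h := pathTerm_eq (M.Pmat d) (fun s j => ¬(s ≠ z ∧ j = z)) z n f
  convert h using 3
  ext s j
  by_cases hc : s ≠ z ∧ j = z
  · simp only [Matrix.of_apply]
    rw [if_neg (by tauto), if_neg (by tauto)]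
  · simp only [Matrix.of_apply]
    rw [if_pos hc, if_pos hc]

lemma passSum_eq_qsum (i z : S) (f : S → ℝ) :
    passSum (M.Pmat d) i z f = qsum (Nmat M d z) f i :=
  tsum_congr (passTerm_eq_mulVec i z f)

lemma retSum_eq_qsum (z : S) (f : S → ℝ) :
    retSum (M.Pmat d) z f = qsum (Rmat M d z) f z :=
  tsum_congr (retTerm_eq_mulVec z f)

lemma desc_root_eq (T : SFTree S) : T.desc T.root = Finset.univ.erase T.root := by
  ext r
  rw [mem_desc, Finset.mem_erase]
  constructor
  · rintro ⟨h1, -⟩; exact ⟨h1, Finset.mem_univ r⟩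
  · rintro ⟨h1, -⟩; exact ⟨h1, T.reaches_root r⟩

section Parts

/-- Part (a): first-passage values equal the recursion values. -/
lemma partA (hsf : M.IsSkipFree T) (hirr : MatIrreducible (M.Pmat d)) (f y : S → ℝ)
    (heq : ∀ j, j ≠ T.root → M.Pmat d j (T.parent j) * y j
      = f j + ∑ r ∈ T.desc j, M.ptail T j (d j) r * y r) :
    ∀ i, i ≠ T.root → passSum (M.Pmat d) i (T.parent i) f = y i := by
  intro i hi
  set z := T.parent i with hzdef
  set W := T.subtree i with hWdef
  have hroot : T.root ∉ W := fun h => hi ((root_mem_subtree_iff T).mp h)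
  have hW_sub : ∀ r ∈ W, T.subtree r ⊆ W := fun r hr => subtree_subset T hr
  have hz : ∀ r ∈ W, z ∉ T.subtree r := by
    intro r hr hc
    exact parent_not_mem_subtree T hi (hW_sub r hr hc)
  have hW_par : ∀ j ∈ W, T.parent j = z ∨ T.parent j ∈ W := by
    intro j hj
    by_cases hji : j = i
    · left; rw [hji]
    · right; exact parent_mem_subtree_of_ne T hj hji
  have heqW : ∀ j ∈ W, M.Pmat d j (T.parent j) * y j
      = f j + ∑ r ∈ T.desc j, M.ptail T j (d j) r * y r :=
    fun j hj => heq j (ne_root_of_mem_subtree T hi hj)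
  obtain ⟨-, -, -, -, -, -, hcontr⟩ := contr_Nmat (M := M) (d := d) hirr z
  have hmain := mainW hsf W z f y hroot hW_sub hz hW_par heqW hcontr i (self_mem_subtree T i)
  have hchain : chain T W i = {i} := by
    ext r
    rw [mem_chain', Finset.mem_singleton]
    constructor
    · rintro ⟨hrW, hir⟩
      exact (subtree_antisymm T hrW hir).symm
    · intro h
      rw [h]
      exact ⟨self_mem_subtree T i, self_mem_subtree T i⟩
  rw [passSum_eq_qsum, hmain, hchain, Finset.sum_singleton]

/-- Part (b): the expected revised first-return value at the root. -/
lemma partB (hsf : M.IsSkipFree T) (hirr : MatIrreducible (M.Pmat d))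
    (h00 : M.Pmat d T.root T.root < 1) (f y : S → ℝ)
    (heq : ∀ j, j ≠ T.root → M.Pmat d j (T.parent j) * y j
      = f j + ∑ r ∈ T.desc j, M.ptail T j (d j) r * y r) :
    retSum (M.Pmat d) T.root f
      = (f T.root + ∑ k ∈ T.desc T.root, M.ptail T T.root (d T.root) k * y k)
        / (1 - M.Pmat d T.root T.root) := by
  set z := T.root with hzdef
  set W := Finset.univ.erase T.root with hWdef
  have hmemW : ∀ k : S, k ∈ W ↔ k ≠ T.root := by
    intro k
    rw [hWdef, Finset.mem_erase]
    exact ⟨fun h => h.1, fun h => ⟨h, Finset.mem_univ k⟩⟩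
  have hroot : T.root ∉ W := fun h => ((hmemW _).mp h) rfl
  have hW_sub : ∀ r ∈ W, T.subtree r ⊆ W := by
    intro r hr k hk
    exact (hmemW k).mpr (ne_root_of_mem_subtree T ((hmemW r).mp hr) hk)
  have hz : ∀ r ∈ W, z ∉ T.subtree r := by
    intro r hr hc
    exact (hmemW r).mp hr ((root_mem_subtree_iff T).mp hc)
  have hW_par : ∀ j ∈ W, T.parent j = z ∨ T.parent j ∈ W := by
    intro j _
    by_cases hp : T.parent j = T.root
    · left; exact hp
    · right; exact (hmemW _).mpr hp
  have heqW : ∀ j ∈ W, M.Pmat d j (T.parent j) * y j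
      = f j + ∑ r ∈ T.desc j, M.ptail T j (d j) r * y r :=
    fun j hj => heq j ((hmemW j).mp hj)
  obtain ⟨-, -, -, -, -, -, hcontrN⟩ := contr_Nmat (M := M) (d := d) hirr z
  have hmain := mainW hsf W z f y hroot hW_sub hz hW_par heqW hcontrN
  have hcontrR : Contr (Rmat M d z) := contr_Rmat hirr h00
  -- identify qsum R with qsum N off the root
  have hRN : ∀ k, k ≠ T.root → qsum (Rmat M d z) f k = qsum (Nmat M d z) f k := by
    intro k hk
    refine tsum_congr fun n => ?_
    rw [mulVec_apply, mulVec_apply]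
    refine Finset.sum_congr rfl fun j _ => ?_
    rw [Rmat_pow_ne z n k hk j]
    by_cases hj : j = z
    · subst hj
      rw [if_pos rfl]
      have hcol : ((Nmat M d z) ^ n) k z = 0 := by
        cases n with
        | zero => exact Matrix.one_apply_ne hk
        | succ n => exact Nmat_pow_col z n k
      rw [hcol]
    · rw [if_neg hj]
  set H := qsum (Rmat M d z) f T.root with hH
  have hfix : H = f T.root + ((Rmat M d z).mulVec (qsum (Rmat M d z) f)) T.root :=
    qsum_fixed hcontrR f T.root
  have hsplit : ((Rmat M d z).mulVec (qsum (Rmat M d z) f)) T.root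
      = M.Pmat d T.root T.root * H
        + ∑ k ∈ W, M.Pmat d T.root k * (∑ r ∈ chain T W k, y r) := by
    rw [mulVec_apply, ← Finset.add_sum_erase _ _ (Finset.mem_univ T.root)]
    congr 1
    · rw [Rmat_row_z]
    · refine Finset.sum_congr rfl fun k hk => ?_
      have hkr : k ≠ T.root := Finset.ne_of_mem_erase hk
      rw [Rmat_row_z, hRN k hkr, hmain k ((hmemW k).mpr hkr)]
  have hexch : ∑ k ∈ W, M.Pmat d T.root k * (∑ r ∈ chain T W k, y r)
      = ∑ r ∈ W, M.ptail T T.root (d T.root) r * y r := by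
    rw [← exchangeX W z y hW_sub hz T.root]
    refine Finset.sum_congr rfl fun k hk => ?_
    congr 1
    rw [Nmat, Matrix.of_apply, if_pos ((hmemW k).mp hk)]
  have hdesc : ∑ r ∈ W, M.ptail T T.root (d T.root) r * y r
      = ∑ k ∈ T.desc T.root, M.ptail T T.root (d T.root) k * y k := by
    rw [desc_root_eq]
  have hne : (1 : ℝ) - M.Pmat d T.root T.root ≠ 0 := by linarith
  have hfinal : H * (1 - M.Pmat d T.root T.root)
      = f T.root + ∑ k ∈ T.desc T.root, M.ptail T T.root (d T.root) k * y k := by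
    rw [hsplit, hexch, hdesc] at hfix
    ring_nf
    ring_nf at hfix
    linarith
  have : retSum (M.Pmat d) T.root f = H := retSum_eq_qsum T.root f
  rw [this, eq_div_iff hne]
  exact hfinal

end Parts

end Stmt8Aux
namespace Stmt8Aux

variable {S A : Type*} [Fintype S] [DecidableEq S] [Nonempty S]
variable {T : SFTree S} {M : MDP S A} {d : S → A}

lemma desc_ssubset {j r : S} (hr : r ∈ T.desc j) : T.desc r ⊂ T.desc j := by
  obtain ⟨hrj, hsub⟩ := (mem_desc T).mp hr
  have hrsub : r ∈ T.subtree j := (mem_subtree T).mpr hsub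
  constructor
  · intro k hk
    obtain ⟨hkr, hksub⟩ := (mem_desc T).mp hk
    have hk2 : k ∈ T.subtree j := subtree_trans T hrsub ((mem_subtree T).mpr hksub)
    refine (mem_desc T).mpr ⟨?_, (mem_subtree T).mp hk2⟩
    rintro rfl
    exact hrj (subtree_antisymm T hrsub ((mem_subtree T).mpr hksub)).symm
  · intro hcon
    have := hcon hr
    exact ((mem_desc T).mp this).1 rfl

lemma t_nonneg (hpar : ∀ j, j ≠ T.root → 0 < M.Pmat d j (T.parent j)) (t : S → ℝ)
    (ht : ∀ j, j ≠ T.root → M.Pmat d j (T.parent j) * t j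
      = 1 + ∑ r ∈ T.desc j, M.ptail T j (d j) r * t r) :
    ∀ j, j ≠ T.root → 0 ≤ t j := by
  have key : ∀ n : ℕ, ∀ j, j ≠ T.root → (T.desc j).card = n → 0 ≤ t j := by
    intro n
    induction n using Nat.strong_induction_on with
    | _ n ih =>
      intro j hj hcard
      have hsum : 0 ≤ ∑ r ∈ T.desc j, M.ptail T j (d j) r * t r := by
        refine Finset.sum_nonneg fun r hr => ?_
        have hrroot : r ≠ T.root := by
          have := (mem_desc T).mp hr
          exact ne_root_of_mem_subtree T hj ((mem_subtree T).mpr this.2)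
        have hlt : (T.desc r).card < n := by
          rw [← hcard]
          exact Finset.card_lt_card (desc_ssubset hr)
        exact mul_nonneg (ptail_nonneg j r) (ih _ hlt r hrroot rfl)
      have heq := ht j hj
      have hp := hpar j hj
      nlinarith
  intro j hj
  exact key _ j hj rfl

/-- Part (c): the average cost. -/
lemma partC (hsf : M.IsSkipFree T) (hirr : MatIrreducible (M.Pmat d))
    (h00 : M.Pmat d T.root T.root < 1)
    (hpar : ∀ j, j ≠ T.root → 0 < M.Pmat d j (T.parent j))
    (y t : S → ℝ)
    (heqy : ∀ j, j ≠ T.root → M.Pmat d j (T.parent j) * y j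
      = M.cvec d j + ∑ r ∈ T.desc j, M.ptail T j (d j) r * y r)
    (heqt : ∀ j, j ≠ T.root → M.Pmat d j (T.parent j) * t j
      = 1 + ∑ r ∈ T.desc j, M.ptail T j (d j) r * t r) :
    ∀ i, M.avgCost d i
      = (M.c T.root (d T.root)
          + ∑ k ∈ T.desc T.root, M.ptail T T.root (d T.root) k * y k)
        / (1 + ∑ k ∈ T.desc T.root, M.ptail T T.root (d T.root) k * t k) := by
  set W := Finset.univ.erase T.root with hWdef
  have hmemW : ∀ k : S, k ∈ W ↔ k ≠ T.root := by
    intro k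
    rw [hWdef, Finset.mem_erase]
    exact ⟨fun h => h.1, fun h => ⟨h, Finset.mem_univ k⟩⟩
  have hroot : T.root ∉ W := fun h => ((hmemW _).mp h) rfl
  have hW_sub : ∀ r ∈ W, T.subtree r ⊆ W := by
    intro r hr k hk
    exact (hmemW k).mpr (ne_root_of_mem_subtree T ((hmemW r).mp hr) hk)
  have hz : ∀ r ∈ W, T.root ∉ T.subtree r := by
    intro r hr hc
    exact (hmemW r).mp hr ((root_mem_subtree_iff T).mp hc)
  set SY := ∑ k ∈ T.desc T.root, M.ptail T T.root (d T.root) k * y k with hSY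
  set ST := ∑ k ∈ T.desc T.root, M.ptail T T.root (d T.root) k * t k with hST
  have hST0 : 0 ≤ ST := by
    rw [hST]
    refine Finset.sum_nonneg fun k hk => ?_
    have hkroot : k ≠ T.root := ((mem_desc T).mp hk).1
    exact mul_nonneg (ptail_nonneg T.root k) (t_nonneg hpar t heqt k hkroot)
  have hD : (0 : ℝ) < 1 + ST := by linarith
  set g := (M.cvec d T.root + SY) / (1 + ST) with hgdef
  have hgD : g * (1 + ST) = M.cvec d T.root + SY := by
    rw [hgdef, div_mul_cancel₀]
    linarith
  set Yc : S → ℝ := fun j => ∑ r ∈ chain T W j, y r with hYc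
  set Tc : S → ℝ := fun j => ∑ r ∈ chain T W j, t r with hTc
  have hchain_root : chain T W T.root = ∅ := by
    refine Finset.eq_empty_of_forall_notMem fun r hr => ?_
    obtain ⟨hrW, hrt⟩ := mem_chain'.mp hr
    exact (hmemW r).mp hrW ((root_mem_subtree_iff T).mp hrt)
  have hYc_root : Yc T.root = 0 := by rw [hYc]; simp only []; rw [hchain_root]; simp
  have hTc_root : Tc T.root = 0 := by rw [hTc]; simp only []; rw [hchain_root]; simp
  -- the key conversion between N-sums and P-sums
  have key : ∀ (v : S → ℝ) (j : S),
      (∑ k, Nmat M d T.root j k * (if k ∈ W then (∑ r ∈ chain T W k, v r) else 0))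
        = ∑ k, M.Pmat d j k * (∑ r ∈ chain T W k, v r) := by
    intro v j
    refine Finset.sum_congr rfl fun k _ => ?_
    by_cases hk : k = T.root
    · subst hk
      have h1 : Nmat M d T.root j T.root = 0 := by
        rw [Nmat, Matrix.of_apply, if_neg (by simp)]
      rw [h1, zero_mul, hchain_root]
      simp
    · rw [Nmat, Matrix.of_apply, if_pos hk, if_pos ((hmemW k).mpr hk)]
  have key2 : ∀ (v : S → ℝ) (j : S),
      (∑ k, M.Pmat d j k * (∑ r ∈ chain T W k, v r))
        = ∑ r ∈ W, M.ptail T j (d j) r * v r := by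
    intro v j
    rw [← key v j]
    rw [← Finset.sum_subset (Finset.subset_univ W)
      (fun k _ hk => by rw [if_neg hk, mul_zero])]
    rw [← exchangeX W T.root v hW_sub hz j]
    exact Finset.sum_congr rfl fun k hk => by rw [if_pos hk]
  -- Poisson equation for h := Yc - g • Tc
  set h : S → ℝ := fun j => Yc j - g * Tc j with hh
  have heqWy : ∀ j ∈ W, M.Pmat d j (T.parent j) * y j
      = M.cvec d j + ∑ r ∈ T.desc j, M.ptail T j (d j) r * y r :=
    fun j hj => heqy j ((hmemW j).mp hj)
  have heqWt : ∀ j ∈ W, M.Pmat d j (T.parent j) * t j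
      = (fun _ => (1:ℝ)) j + ∑ r ∈ T.desc j, M.ptail T j (d j) r * t r :=
    fun j hj => heqt j ((hmemW j).mp hj)
  have hVy := claimV hsf W T.root (M.cvec d) y hroot hW_sub hz heqWy
  have hVt := claimV hsf W T.root (fun _ => (1:ℝ)) t hroot hW_sub hz heqWt
  have hPoisson : ∀ j, M.cvec d j = g + h j - ∑ k, M.Pmat d j k * h k := by
    have hPh : ∀ j, ∑ k, M.Pmat d j k * h k
        = (∑ k, M.Pmat d j k * Yc k) - g * ∑ k, M.Pmat d j k * Tc k := by
      intro j
      rw [Finset.mul_sum, ← Finset.sum_sub_distrib]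
      exact Finset.sum_congr rfl fun k _ => by rw [hh]; ring
    intro j
    by_cases hj : j = T.root
    · subst hj
      have h1 : ∑ k, M.Pmat d T.root k * Yc k = SY := by
        rw [hYc]; simp only []
        rw [key2 y T.root, hSY, desc_root_eq, hWdef]
      have h2 : ∑ k, M.Pmat d T.root k * Tc k = ST := by
        rw [hTc]; simp only []
        rw [key2 t T.root, hST, desc_root_eq, hWdef]
      have h3 : h T.root = 0 := by rw [hh]; simp only []; rw [hYc_root, hTc_root]; ring
      rw [hPh, h1, h2, h3]
      linarith [hgD]
    · have hjW : j ∈ W := (hmemW j).mpr hj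
      have hYj : Yc j = M.cvec d j + ∑ k, M.Pmat d j k * Yc k := by
        have := hVy j hjW
        rw [hYc]; simp only []
        rw [this, key y j]
      have hTj : Tc j = 1 + ∑ k, M.Pmat d j k * Tc k := by
        have := hVt j hjW
        rw [hTc]; simp only []
        rw [this, key t j]
      rw [hPh, hh]
      simp only []
      have e3 : g * Tc j = g + g * ∑ k, M.Pmat d j k * Tc k := by rw [hTj]; ring
      linarith [hYj, e3]
  -- telescoping
  intro i
  have htel : ∀ n : ℕ, ((M.Pmat d ^ n).mulVec (M.cvec d)) i
      = g + ((M.Pmat d ^ n).mulVec h) i - ((M.Pmat d ^ (n + 1)).mulVec h) i := by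
    intro n
    have hlast : ((M.Pmat d ^ (n + 1)).mulVec h) i
        = ∑ k, (M.Pmat d ^ n) i k * (∑ l, M.Pmat d k l * h l) := by
      rw [pow_succ, ← Matrix.mulVec_mulVec, mulVec_apply]
      exact Finset.sum_congr rfl fun k _ => by rw [mulVec_apply]
    rw [mulVec_apply, mulVec_apply, hlast]
    have hexp : ∀ k, (M.Pmat d ^ n) i k * M.cvec d k
        = g * (M.Pmat d ^ n) i k + (M.Pmat d ^ n) i k * h k
          - (M.Pmat d ^ n) i k * (∑ l, M.Pmat d k l * h l) := by
      intro k
      rw [hPoisson k]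
      ring
    rw [Finset.sum_congr rfl fun k _ => hexp k]
    rw [Finset.sum_sub_distrib, Finset.sum_add_distrib, ← Finset.mul_sum]
    have : ∑ k, (M.Pmat d ^ n) i k = 1 := rs_Pmat n i
    rw [this, mul_one]
  have hsum : ∀ n : ℕ, ∑ m ∈ Finset.range n, ((M.Pmat d ^ m).mulVec (M.cvec d)) i
      = n * g + (h i - ((M.Pmat d ^ n).mulVec h) i) := by
    intro n
    rw [Finset.sum_congr rfl fun m _ => htel m]
    have hsplit : ∑ m ∈ Finset.range n,
        (g + (((M.Pmat d ^ m).mulVec h) i - ((M.Pmat d ^ (m + 1)).mulVec h) i))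
        = (∑ _m ∈ Finset.range n, g)
          + ∑ m ∈ Finset.range n,
            (((M.Pmat d ^ m).mulVec h) i - ((M.Pmat d ^ (m + 1)).mulVec h) i) := by
      rw [← Finset.sum_add_distrib]
    have hcongr : ∀ m ∈ Finset.range n,
        g + ((M.Pmat d ^ m).mulVec h) i - ((M.Pmat d ^ (m + 1)).mulVec h) i
        = g + (((M.Pmat d ^ m).mulVec h) i - ((M.Pmat d ^ (m + 1)).mulVec h) i) :=
      fun m _ => by ring
    rw [Finset.sum_congr rfl hcongr, hsplit, Finset.sum_const, Finset.card_range,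
      Finset.sum_range_sub' (fun m => ((M.Pmat d ^ m).mulVec h) i) n]
    rw [pow_zero, Matrix.one_mulVec]
    ring
  obtain ⟨Ch, hCh0, hChub, -⟩ := exists_bound h
  have habs : ∀ n : ℕ, |((M.Pmat d ^ n).mulVec h) i| ≤ Ch := by
    intro n
    have := abs_mulVec_le (Pmat_nonneg (M := M) (d := d)) n hChub i
    rw [rs_Pmat, one_mul] at this
    exact this
  have he : Tendsto (fun n : ℕ => (n : ℝ)⁻¹ * (h i - ((M.Pmat d ^ n).mulVec h) i))
      atTop (nhds 0) := by
    refine squeeze_zero_norm (a := fun n : ℕ => (|h i| + Ch) / n) ?_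
      (tendsto_const_div_atTop_nhds_zero_nat (|h i| + Ch))
    intro n
    have hb : |h i - ((M.Pmat d ^ n).mulVec h) i| ≤ |h i| + Ch := by
      calc |h i - ((M.Pmat d ^ n).mulVec h) i|
          ≤ |h i| + |((M.Pmat d ^ n).mulVec h) i| := abs_sub _ _
        _ ≤ |h i| + Ch := by linarith [habs n]
    show ‖(↑n : ℝ)⁻¹ * (h i - ((M.Pmat d ^ n).mulVec h) i)‖ ≤ (|h i| + Ch) / (n : ℝ)
    rw [Real.norm_eq_abs, abs_mul, abs_inv, Nat.abs_cast, div_eq_inv_mul]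
    exact mul_le_mul_of_nonneg_left hb (by positivity)
  have hT : Tendsto (fun n : ℕ => (n : ℝ)⁻¹
      * ∑ m ∈ Finset.range n, ((M.Pmat d ^ m).mulVec (M.cvec d)) i) atTop (nhds g) := by
    have h2 : Tendsto (fun n : ℕ => g + (n : ℝ)⁻¹
        * (h i - ((M.Pmat d ^ n).mulVec h) i)) atTop (nhds (g + 0)) :=
      tendsto_const_nhds.add he
    rw [add_zero] at h2
    refine Tendsto.congr' ?_ h2
    refine Filter.eventually_atTop.mpr ⟨1, fun n hn => ?_⟩
    have hn0 : (n : ℝ) ≠ 0 := by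
      have : (0:ℕ) < n := hn
      positivity
    show g + (↑n : ℝ)⁻¹ * (h i - ((M.Pmat d ^ n).mulVec h) i)
      = (↑n : ℝ)⁻¹ * ∑ m ∈ Finset.range n, ((M.Pmat d ^ m).mulVec (M.cvec d)) i
    rw [hsum n]
    field_simp
  have : M.avgCost d i = g := by
    rw [MDP.avgCost]
    exact hT.limsup_eq
  rw [this, hgdef]
  rfl

end Stmt8Aux
/-- for a finite recurrent skip-free MDP on a tree, a fixed policy `d` and
`x ∈ ℝ`, the values `y` and `t` defined by the downward recursions (with actions `d i`)
equal the expected `x`-revised first-passage cost and the expected first-passage time from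
`i` to its parent; `H(d,x)` and `τ(d)` are given by the corresponding root formulas; and if
`x = 0` then `g(d)` equals the displayed ratio. -/
theorem stmt8 {S A : Type*} [Fintype S] [DecidableEq S] [Fintype A] [Nonempty A]
    (T : SFTree S) (M : MDP S A)
    (hsf : M.IsSkipFree T) (hrec : IsRecurrentModel M)
    (h00 : ∀ a : A, M.p T.root a T.root < 1)
    (hpar : ∀ i, i ≠ T.root → ∀ a : A, 0 < M.p i a (T.parent i))
    (d : S → A) (x : ℝ) (y t : S → ℝ)
    (hy : ∀ i, i ≠ T.root →
      y i = (M.c i (d i) - x + ∑ k ∈ T.desc i, M.ptail T i (d i) k * y k)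
          / M.p i (d i) (T.parent i))
    (ht : ∀ i, i ≠ T.root →
      t i = (1 + ∑ k ∈ T.desc i, M.ptail T i (d i) k * t k) / M.p i (d i) (T.parent i)) :
    (∀ i, i ≠ T.root →
        y i = passSum (M.Pmat d) i (T.parent i) (fun s => M.cvec d s - x)
        ∧ t i = passSum (M.Pmat d) i (T.parent i) (fun _ => (1 : ℝ)))
    ∧ retSum (M.Pmat d) T.root (fun s => M.cvec d s - x)
        = (M.c T.root (d T.root) - x
            + ∑ k ∈ T.desc T.root, M.ptail T T.root (d T.root) k * y k)
          / (1 - M.p T.root (d T.root) T.root)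
    ∧ retSum (M.Pmat d) T.root (fun _ => (1 : ℝ))
        = (1 + ∑ k ∈ T.desc T.root, M.ptail T T.root (d T.root) k * t k)
          / (1 - M.p T.root (d T.root) T.root)
    ∧ (x = 0 → ∀ i, M.avgCost d i
        = (M.c T.root (d T.root) + ∑ k ∈ T.desc T.root, M.ptail T T.root (d T.root) k * y k)
          / (1 + ∑ k ∈ T.desc T.root, M.ptail T T.root (d T.root) k * t k)) := by
  have hne : Nonempty S := ⟨T.root⟩
  have hirr : MatIrreducible (M.Pmat d) := hrec d
  have h00' : M.Pmat d T.root T.root < 1 := h00 (d T.root)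
  have hpar' : ∀ j, j ≠ T.root → 0 < M.Pmat d j (T.parent j) :=
    fun j hj => hpar j hj (d j)
  have hPeq : ∀ j, M.Pmat d j (T.parent j) = M.p j (d j) (T.parent j) := fun _ => rfl
  have heqy : ∀ j, j ≠ T.root → M.Pmat d j (T.parent j) * y j
      = (M.cvec d j - x) + ∑ r ∈ T.desc j, M.ptail T j (d j) r * y r := by
    intro j hj
    have hp := hpar j hj (d j)
    rw [hy j hj, hPeq, mul_div_cancel₀ _ hp.ne']
    rfl
  have heqt : ∀ j, j ≠ T.root → M.Pmat d j (T.parent j) * t j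
      = (1 : ℝ) + ∑ r ∈ T.desc j, M.ptail T j (d j) r * t r := by
    intro j hj
    have hp := hpar j hj (d j)
    rw [ht j hj, hPeq, mul_div_cancel₀ _ hp.ne']
  refine ⟨?_, ?_, ?_, ?_⟩
  · intro i hi
    exact ⟨(Stmt8Aux.partA hsf hirr (fun s => M.cvec d s - x) y heqy i hi).symm,
      (Stmt8Aux.partA hsf hirr (fun _ => (1 : ℝ)) t heqt i hi).symm⟩
  · exact Stmt8Aux.partB hsf hirr h00' (fun s => M.cvec d s - x) y heqy
  · exact Stmt8Aux.partB hsf hirr h00' (fun _ => (1 : ℝ)) t heqt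
  · intro hx
    subst hx
    have heqy0 : ∀ j, j ≠ T.root → M.Pmat d j (T.parent j) * y j
        = M.cvec d j + ∑ r ∈ T.desc j, M.ptail T j (d j) r * y r := by
      intro j hj
      have := heqy j hj
      rw [sub_zero] at this
      exact this
    exact Stmt8Aux.partC hsf hirr h00' hpar' y t heqy0 heqt
end

section
/- Consider a finite recurrent MDP on S that is skip-free in the negative direction on the tree. Let d be a fixed stationary deterministic policy and x = g(d). Let a_i and y_i (i ≠ 0) come from the downward recursion y_i = min_{a∈A} (c_i(a) − x + ∑_{k∈D(i)} p̄_{ik}(a) y_k)/p_{iρ(i)}(a) with a_i attaining the minimum, and let t_i be defined by t_i = (1 + ∑_{k∈D(i)} p̄_{ik}(a_i) t_k)/p_{iρ(i)}(a_i). Let a_0¹ = argmin_a (c_0(a) − x + ∑_{k∈D(0)} p̄_{0k}(a) y_k)/(1 − p_{00}(a)); a_0² = argmin_a { c_0(a) − x + ∑_{k∈D(0)} p̄_{0k}(a) y_k }; a_0³ = argmin_a (c_0(a) − x + ∑_{k∈D(0)} p̄_{0k}(a) y_k)/(1 + ∑_{k∈D(0)} p̄_{0k}(a) t_k). For k = 1,2,3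 let dᵏ be the policy taking action a_i in each i ≠ 0 and action a_0ᵏ in state 0. Then either (i) g(dᵏ) < g(d) for all k ∈ {1,2,3}, or (ii) g(dᵏ) = g(d) for all k ∈ {1,2,3} and each dᵏ, as well as d itself, is an average cost optimal policy (achieves the minimum of g(d') over all stationary deterministic policies d'). -/
open Finset Filter

set_option linter.unusedSectionVars false
section SF9aux

namespace SFTree

variable {S : Type*} [Fintype S] [DecidableEq S] (T : SFTree S)

lemma iter_root (n : ℕ) : T.parent^[n] T.root = T.root := by
  induction n with
  | zero => rfl
  | succ n ih => rw [Function.iterate_succ_apply', ih, T.parent_root]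

lemma eq_root_of_cycle {i : S} {n : ℕ} (h : T.parent^[n] i = i) (hn : 0 < n) :
    i = T.root := by
  obtain ⟨N, hN⟩ := T.reaches_root i
  have hfix : ∀ m : ℕ, T.parent^[m * n] i = i := by
    intro m
    rw [Nat.mul_comm, Function.iterate_mul]
    exact Function.iterate_fixed h m
  have hge : N ≤ (N + 1) * n := by
    calc N ≤ N + 1 := Nat.le_succ N
    _ = (N + 1) * 1 := (Nat.mul_one _).symm
    _ ≤ (N + 1) * n := Nat.mul_le_mul_left _ hn
  have : T.parent^[(N + 1) * n] i = T.root := by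
    rw [← Nat.sub_add_cancel hge, Function.iterate_add_apply, hN, iter_root]
  rw [hfix (N + 1)] at this
  exact this

variable {T}

lemma mem_subtree_iff {i j : S} : j ∈ T.subtree i ↔ ∃ n : ℕ, T.parent^[n] j = i := by
  classical
  simp [subtree]

lemma mem_desc_iff {i j : S} :
    j ∈ T.desc i ↔ j ≠ i ∧ ∃ n : ℕ, T.parent^[n] j = i := by
  classical
  simp [desc]

lemma self_mem_subtree (i : S) : i ∈ T.subtree i := mem_subtree_iff.2 ⟨0, rfl⟩

lemma subtree_antisymm {i k : S} (h1 : i ∈ T.subtree k) (h2 : k ∈ T.subtree i) :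
    i = k := by
  obtain ⟨n, hn⟩ := mem_subtree_iff.1 h1
  obtain ⟨m, hm⟩ := mem_subtree_iff.1 h2
  rcases Nat.eq_zero_or_pos (m + n) with h | h
  · obtain ⟨hm0, hn0⟩ : m = 0 ∧ n = 0 := by omega
    subst hn0; exact hn
  · have hcyc : T.parent^[m + n] i = i := by
      rw [Function.iterate_add_apply, hn, hm]
    have := T.eq_root_of_cycle hcyc h
    subst this
    rw [T.iter_root] at hn
    exact hn

lemma subtree_trans {i k : S} (h : i ∈ T.subtree k) : T.subtree i ⊆ T.subtree k := by
  intro j hj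
  obtain ⟨n, hn⟩ := mem_subtree_iff.1 hj
  obtain ⟨m, hm⟩ := mem_subtree_iff.1 h
  exact mem_subtree_iff.2 ⟨m + n, by rw [Function.iterate_add_apply, hn, hm]⟩

lemma parent_mem_subtree_of {i k : S} (h : i ∈ T.subtree k) (hik : i ≠ k) :
    T.parent i ∈ T.subtree k := by
  obtain ⟨n, hn⟩ := mem_subtree_iff.1 h
  cases n with
  | zero => exact absurd hn hik
  | succ n =>
    refine mem_subtree_iff.2 ⟨n, ?_⟩
    rw [← hn, ← Function.iterate_succ_apply]

lemma parent_not_mem_subtree {i : S} (hi : i ≠ T.root) : T.parent i ∉ T.subtree i := by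
  intro h
  obtain ⟨n, hn⟩ := mem_subtree_iff.1 h
  exact hi (T.eq_root_of_cycle (n := n + 1)
    (by rw [Function.iterate_succ_apply, hn]) (Nat.succ_pos n))

lemma root_not_mem_desc (i : S) : T.root ∉ T.desc i := by
  intro h
  obtain ⟨hne, n, hn⟩ := mem_desc_iff.1 h
  rw [T.iter_root] at hn
  exact hne hn

lemma ne_root_of_mem_desc {i j : S} (h : j ∈ T.desc i) : j ≠ T.root := by
  intro hj; rw [hj] at h; exact T.root_not_mem_desc i h

lemma mem_desc_iff_subtree {i k : S} : k ∈ T.desc i ↔ k ≠ i ∧ k ∈ T.subtree i := by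
  rw [mem_desc_iff, mem_subtree_iff]

lemma desc_subset_of_mem {i k : S} (h : k ∈ T.desc i) : T.desc k ⊆ T.desc i := by
  intro j hj
  obtain ⟨hjk, hjT⟩ := mem_desc_iff_subtree.1 hj
  obtain ⟨hki, hkT⟩ := mem_desc_iff_subtree.1 h
  refine mem_desc_iff_subtree.2 ⟨?_, subtree_trans hkT hjT⟩
  intro hji
  subst hji
  exact hki (subtree_antisymm hkT hjT)

lemma desc_card_lt {i k : S} (h : k ∈ T.desc i) : (T.desc k).card < (T.desc i).card := by
  refine Finset.card_lt_card ⟨desc_subset_of_mem h, fun hsub => ?_⟩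
  have := hsub h
  exact (mem_desc_iff.1 this).1 rfl

lemma desc_root_eq : T.desc T.root = Finset.univ.filter (· ≠ T.root) := by
  classical
  ext j
  simp only [mem_desc_iff, Finset.mem_filter, Finset.mem_univ, true_and]
  exact ⟨fun h => h.1, fun h => ⟨h, T.reaches_root j⟩⟩

end SFTree

end SF9aux

section SF9aux2
set_option linter.unusedSectionVars false

open Finset

namespace MDP

variable {S A : Type*} [Fintype S] [DecidableEq S]
variable {M : MDP S A} {T : SFTree S}

lemma ptail_nonneg (i : S) (a : A) (k : S) : 0 ≤ M.ptail T i a k :=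
  Finset.sum_nonneg fun j _ => M.p_nonneg i a j

lemma ptail_self (hsf : M.IsSkipFree T) {i : S} (hi : i ≠ T.root) (a : A) :
    M.ptail T i a i = 1 - M.p i a (T.parent i) := by
  classical
  have hsub : insert (T.parent i) (T.subtree i) ⊆ Finset.univ := Finset.subset_univ _
  have hzero : ∀ j ∈ Finset.univ, j ∉ insert (T.parent i) (T.subtree i) → M.p i a j = 0 := by
    intro j _ hj
    by_contra hne
    rcases hsf i hi a j hne with h | h
    · exact hj (Finset.mem_insert.2 (Or.inl h))
    · exact hj (Finset.mem_insert.2 (Or.inr h))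
  have hsum : ∑ j ∈ insert (T.parent i) (T.subtree i), M.p i a j = 1 := by
    rw [Finset.sum_subset hsub hzero, M.p_sum_one]
  rw [Finset.sum_insert (SFTree.parent_not_mem_subtree hi)] at hsum
  unfold ptail
  linarith

lemma ptail_anc (hsf : M.IsSkipFree T) {i k : S} (hi : i ≠ T.root)
    (hik : i ∈ T.subtree k) (hne : i ≠ k) (a : A) : M.ptail T i a k = 1 := by
  classical
  have hins : insert (T.parent i) (T.subtree i) ⊆ T.subtree k := by
    intro j hj
    rcases Finset.mem_insert.1 hj with h | h
    · rw [h]; exact SFTree.parent_mem_subtree_of hik hne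
    · exact SFTree.subtree_trans hik h
  have hzero : ∀ j ∈ T.subtree k, j ∉ insert (T.parent i) (T.subtree i) → M.p i a j = 0 := by
    intro j _ hj
    by_contra hp
    rcases hsf i hi a j hp with h | h
    · exact hj (Finset.mem_insert.2 (Or.inl h))
    · exact hj (Finset.mem_insert.2 (Or.inr h))
  have : M.ptail T i a k = ∑ j ∈ insert (T.parent i) (T.subtree i), M.p i a j :=
    (Finset.sum_subset hins hzero).symm
  rw [this, Finset.sum_insert (SFTree.parent_not_mem_subtree hi)]
  have hps := ptail_self (M := M) hsf hi a
  unfold MDP.ptail at hps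
  linarith

lemma ptail_zero (hsf : M.IsSkipFree T) {i k : S} (hi : i ≠ T.root)
    (h1 : i ∉ T.subtree k) (h2 : k ∉ T.subtree i) (a : A) : M.ptail T i a k = 0 := by
  apply Finset.sum_eq_zero
  intro j hj
  by_contra hp
  rcases hsf i hi a j hp with h | h
  · -- j = parent i; then parent i ∈ subtree k, so i ∈ subtree k (one more step)
    subst h
    obtain ⟨n, hn⟩ := SFTree.mem_subtree_iff.1 hj
    exact h1 (SFTree.mem_subtree_iff.2 ⟨n + 1, by rw [Function.iterate_succ_apply, hn]⟩)
  · -- j ∈ subtree i ∩ subtree k : comparability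
    obtain ⟨n, hn⟩ := SFTree.mem_subtree_iff.1 h
    obtain ⟨m, hm⟩ := SFTree.mem_subtree_iff.1 hj
    rcases le_total n m with hle | hle
    · -- k = parent^[m-n] i
      apply h1
      refine SFTree.mem_subtree_iff.2 ⟨m - n, ?_⟩
      rw [← hn, ← Function.iterate_add_apply, Nat.sub_add_cancel hle, hm]
    · apply h2
      refine SFTree.mem_subtree_iff.2 ⟨n - m, ?_⟩
      rw [← hm, ← Function.iterate_add_apply, Nat.sub_add_cancel hle, hn]

end MDP

open Classical in
/-- `Hfun T y j = ∑_{k ≠ root, j ∈ subtree k} y k` : the accumulated `y` along the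
path from `j` to the root (excluding the root). -/
noncomputable def Hfun {S : Type*} [Fintype S] [DecidableEq S] (T : SFTree S)
    (y : S → ℝ) : S → ℝ :=
  fun j => ∑ k ∈ Finset.univ.filter (fun k => k ≠ T.root ∧ j ∈ T.subtree k), y k

lemma Hfun_root {S : Type*} [Fintype S] [DecidableEq S] (T : SFTree S) (y : S → ℝ) :
    Hfun T y T.root = 0 := by
  classical
  unfold Hfun
  apply Finset.sum_eq_zero
  intro k hk
  exfalso
  obtain ⟨hne, hmem⟩ := (Finset.mem_filter.1 hk).2
  obtain ⟨n, hn⟩ := SFTree.mem_subtree_iff.1 hmem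
  rw [T.iter_root] at hn
  exact hne hn.symm

/-- General swap: the `w`-average of `Hfun` is the `ptail`-weighted sum of `y`. -/
lemma Hfun_swap {S A : Type*} [Fintype S] [DecidableEq S] (T : SFTree S) (M : MDP S A)
    (y : S → ℝ) (i : S) (a : A) :
    ∑ j, M.p i a j * Hfun T y j
      = ∑ k ∈ Finset.univ.filter (· ≠ T.root), M.ptail T i a k * y k := by
  classical
  unfold Hfun MDP.ptail
  calc ∑ j, M.p i a j * ∑ k ∈ Finset.univ.filter (fun k => k ≠ T.root ∧ j ∈ T.subtree k), y k
      = ∑ j, ∑ k, if k ≠ T.root ∧ j ∈ T.subtree k then M.p i a j * y k else 0 := by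
        refine Finset.sum_congr rfl fun j _ => ?_
        rw [Finset.mul_sum, Finset.sum_filter]
    _ = ∑ k, ∑ j, if k ≠ T.root ∧ j ∈ T.subtree k then M.p i a j * y k else 0 :=
        Finset.sum_comm
    _ = ∑ k ∈ Finset.univ.filter (· ≠ T.root), (∑ s ∈ T.subtree k, M.p i a s) * y k := by
        rw [Finset.sum_filter]
        refine Finset.sum_congr rfl fun k _ => ?_
        by_cases hk : k = T.root
        · simp [hk]
        · rw [if_pos hk]
          have hterm : ∀ j : S, (if k ≠ T.root ∧ j ∈ T.subtree k then M.p i a j * y k else 0)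
              = (if j ∈ T.subtree k then M.p i a j else 0) * y k := by
            intro j
            by_cases hj : j ∈ T.subtree k <;> simp [hj, hk]
          rw [Finset.sum_congr rfl fun j _ => hterm j, ← Finset.sum_mul]
          congr 1
          rw [Finset.sum_ite_mem, Finset.univ_inter]

section SF9aux3
set_option linter.unusedSectionVars false
open Finset

variable {S A : Type*} [Fintype S] [DecidableEq S]

lemma mulVec_sum_eq (M : MDP S A) (e : S → A) (v : S → ℝ) (i : S) :
    (M.Pmat e).mulVec v i = ∑ j, M.p i (e i) j * v j := by
  simp [Matrix.mulVec, dotProduct, MDP.Pmat]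

lemma Hfun_sum_root (T : SFTree S) (M : MDP S A) (y : S → ℝ) (a : A) :
    ∑ j, M.p T.root a j * Hfun T y j
      = ∑ k ∈ T.desc T.root, M.ptail T T.root a k * y k := by
  classical
  rw [Hfun_swap, SFTree.desc_root_eq]

lemma Hfun_sum_ne_root (T : SFTree S) (M : MDP S A) (hsf : M.IsSkipFree T)
    (y : S → ℝ) {i : S} (hi : i ≠ T.root) (a : A) :
    ∑ j, M.p i a j * Hfun T y j
      = Hfun T y i - M.p i a (T.parent i) * y i
        + ∑ k ∈ T.desc i, M.ptail T i a k * y k := by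
  classical
  rw [Hfun_swap]
  set F := Finset.univ.filter (· ≠ T.root) with hF
  set q := M.p i a (T.parent i) with hq
  have key : ∀ k ∈ F, M.ptail T i a k * y k
      = (if i ∈ T.subtree k ∧ k ≠ i then y k else 0)
        + ((if k = i then (1 - q) * y i else 0)
          + (if k ∈ T.desc i then M.ptail T i a k * y k else 0)) := by
    intro k hk
    have hkroot : k ≠ T.root := (Finset.mem_filter.1 hk).2
    by_cases h1 : k = i
    · subst h1
      have hd : k ∉ T.desc k := fun h => (SFTree.mem_desc_iff.1 h).1 rfl
      rw [MDP.ptail_self hsf hi a]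
      simp [hd, hq]
    · by_cases h2 : i ∈ T.subtree k
      · have hd : k ∉ T.desc i := by
          intro h
          exact h1 (SFTree.subtree_antisymm (SFTree.mem_desc_iff_subtree.1 h).2 h2)
        rw [MDP.ptail_anc hsf hi h2 (fun h => h1 h.symm) a]
        simp [h1, h2, hd, fun h : i = k => h1 h.symm]
      · by_cases h3 : k ∈ T.subtree i
        · have hd : k ∈ T.desc i := SFTree.mem_desc_iff_subtree.2 ⟨h1, h3⟩
          simp [h1, h2, hd]
        · have hd : k ∉ T.desc i := fun h => h3 (SFTree.mem_desc_iff_subtree.1 h).2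
          rw [MDP.ptail_zero hsf hi h2 h3 a]
          simp [h1, h2, hd]
  rw [Finset.sum_congr rfl key, Finset.sum_add_distrib, Finset.sum_add_distrib]
  have hiF : i ∈ F := by
    rw [hF]; exact Finset.mem_filter.2 ⟨Finset.mem_univ i, hi⟩
  have hS1 : (∑ k ∈ F, if i ∈ T.subtree k ∧ k ≠ i then y k else 0) = Hfun T y i - y i := by
    have hyi : y i = ∑ k : S, if k = i then y i else 0 := by
      rw [Finset.sum_ite_eq' Finset.univ i fun _ => y i]
      simp
    have hH : Hfun T y i
        = (∑ k ∈ F, if i ∈ T.subtree k ∧ k ≠ i then y k else 0) + y i := by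
      unfold Hfun
      rw [hF, Finset.sum_filter, Finset.sum_filter]
      conv_rhs => rw [hyi]
      rw [← Finset.sum_add_distrib]
      refine Finset.sum_congr rfl fun k _ => ?_
      by_cases h1 : k = i
      · subst h1; simp [hi, SFTree.self_mem_subtree]
      · by_cases h2 : k = T.root <;> by_cases h3 : i ∈ T.subtree k <;>
          simp [h1, h2, h3, Ne.symm hi]
    linarith
  have hS2 : (∑ k ∈ F, if k = i then (1 - q) * y i else 0) = (1 - q) * y i := by
    rw [Finset.sum_ite_eq' F i fun _ => (1 - q) * y i, if_pos hiF]
  have hS3 : (∑ k ∈ F, if k ∈ T.desc i then M.ptail T i a k * y k else 0)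
      = ∑ k ∈ T.desc i, M.ptail T i a k * y k := by
    rw [Finset.sum_ite_mem]
    congr 1
    rw [Finset.inter_eq_right]
    intro k hk
    rw [hF]
    exact Finset.mem_filter.2 ⟨Finset.mem_univ k, SFTree.ne_root_of_mem_desc hk⟩
  rw [hS1, hS2, hS3]
  ring

end SF9aux3

section SF9aux4
set_option linter.unusedSectionVars false
open Finset Filter Topology

variable {S : Type*} [Fintype S] [DecidableEq S]

lemma pow_stoch {P : Matrix S S ℝ} (h0 : ∀ i j, 0 ≤ P i j) (h1 : ∀ i, ∑ j, P i j = 1)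
    (n : ℕ) : (∀ i j, 0 ≤ (P ^ n) i j) ∧ ∀ i, ∑ j, (P ^ n) i j = 1 := by
  induction n with
  | zero =>
    constructor
    · intro i j
      rw [pow_zero]
      rw [Matrix.one_apply]
      by_cases h : i = j <;> simp [h]
    · intro i
      rw [pow_zero]
      simp [Matrix.one_apply]
  | succ n ih =>
    constructor
    · intro i j
      rw [pow_succ, Matrix.mul_apply]
      exact Finset.sum_nonneg fun k _ => mul_nonneg (ih.1 i k) (h0 k j)
    · intro i
      simp only [pow_succ, Matrix.mul_apply]
      rw [Finset.sum_comm]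
      calc ∑ k, ∑ j, (P ^ n) i k * P k j = ∑ k, (P ^ n) i k * ∑ j, P k j := by
            refine Finset.sum_congr rfl fun k _ => ?_
            rw [Finset.mul_sum]
        _ = ∑ k, (P ^ n) i k := by
            refine Finset.sum_congr rfl fun k _ => by rw [h1 k, mul_one]
        _ = 1 := ih.2 i

lemma mulVec_abs_le {P : Matrix S S ℝ} (h0 : ∀ i j, 0 ≤ P i j)
    (h1 : ∀ i, ∑ j, P i j = 1) (v : S → ℝ) (i : S) :
    |P.mulVec v i| ≤ ∑ j, |v j| := by
  have entry_le : ∀ j, P i j ≤ 1 := by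
    intro j
    calc P i j ≤ ∑ k, P i k := Finset.single_le_sum (fun k _ => h0 i k) (Finset.mem_univ j)
      _ = 1 := h1 i
  calc |P.mulVec v i| = |∑ j, P i j * v j| := by simp [Matrix.mulVec, dotProduct]
    _ ≤ ∑ j, |P i j * v j| := Finset.abs_sum_le_sum_abs _ _
    _ ≤ ∑ j, |v j| := by
        refine Finset.sum_le_sum fun j _ => ?_
        rw [abs_mul, abs_of_nonneg (h0 i j)]
        calc P i j * |v j| ≤ 1 * |v j| := by
              exact mul_le_mul_of_nonneg_right (entry_le j) (abs_nonneg _)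
          _ = |v j| := one_mul _

lemma mulVec_mono {P : Matrix S S ℝ} (h0 : ∀ i j, 0 ≤ P i j) {u v : S → ℝ}
    (huv : ∀ j, u j ≤ v j) (i : S) : P.mulVec u i ≤ P.mulVec v i := by
  simp only [Matrix.mulVec, dotProduct]
  exact Finset.sum_le_sum fun j _ => mul_le_mul_of_nonneg_left (huv j) (h0 i j)

lemma mulVec_affine (Q : Matrix S S ℝ) (h1 : ∀ i, ∑ j, Q i j = 1) (g : ℝ) (h w : S → ℝ)
    (i : S) : Q.mulVec (fun j => g + h j - w j) i = g + Q.mulVec h i - Q.mulVec w i := by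
  simp only [Matrix.mulVec, dotProduct, mul_add, mul_sub]
  rw [Finset.sum_sub_distrib, Finset.sum_add_distrib, ← Finset.sum_mul, h1 i, one_mul]

lemma cesaro_exact {P : Matrix S S ℝ} (h0 : ∀ i j, 0 ≤ P i j)
    (h1 : ∀ i, ∑ j, P i j = 1) {c h : S → ℝ} {g : ℝ}
    (hpois : ∀ i, c i - g + P.mulVec h i = h i) (n : ℕ) (i : S) :
    ∑ t ∈ Finset.range n, (P ^ t).mulVec c i = n * g + h i - (P ^ n).mulVec h i := by
  induction n with
  | zero => simp [Matrix.one_mulVec]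
  | succ n ih =>
    rw [Finset.sum_range_succ, ih]
    have hc : c = fun j => g + h j - P.mulVec h j := by
      funext j
      have := hpois j
      linarith
    have hterm : (P ^ n).mulVec c i
        = g + (P ^ n).mulVec h i - (P ^ (n + 1)).mulVec h i := by
      rw [hc, mulVec_affine (P ^ n) (pow_stoch h0 h1 n).2 g h (P.mulVec h) i]
      rw [Matrix.mulVec_mulVec, ← pow_succ]
    rw [hterm]
    push_cast
    ring

lemma cesaro_ge {P : Matrix S S ℝ} (h0 : ∀ i j, 0 ≤ P i j)
    (h1 : ∀ i, ∑ j, P i j = 1) {c h : S → ℝ} {g : ℝ}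
    (hpois : ∀ i, h i ≤ c i - g + P.mulVec h i) (n : ℕ) (i : S) :
    (n : ℝ) * g + h i - (P ^ n).mulVec h i ≤ ∑ t ∈ Finset.range n, (P ^ t).mulVec c i := by
  induction n with
  | zero => simp [Matrix.one_mulVec]
  | succ n ih =>
    rw [Finset.sum_range_succ]
    have hc : ∀ j, g + h j - P.mulVec h j ≤ c j := by
      intro j
      have := hpois j
      linarith
    have hterm : g + (P ^ n).mulVec h i - (P ^ (n + 1)).mulVec h i ≤ (P ^ n).mulVec c i := by
      have := mulVec_mono (u := fun j => g + h j - P.mulVec h j) (v := c)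
        (pow_stoch h0 h1 n).1 hc i
      rwa [mulVec_affine (P ^ n) (pow_stoch h0 h1 n).2 g h (P.mulVec h) i,
        Matrix.mulVec_mulVec, ← pow_succ] at this
    push_cast
    push_cast at ih
    linarith

lemma limsup_avg_eq {P : Matrix S S ℝ} (h0 : ∀ i j, 0 ≤ P i j)
    (h1 : ∀ i, ∑ j, P i j = 1) {c h : S → ℝ} {g : ℝ}
    (hpois : ∀ i, c i - g + P.mulVec h i = h i) (i : S) :
    Filter.limsup
      (fun n : ℕ => (n : ℝ)⁻¹ * ∑ t ∈ Finset.range n, (P ^ t).mulVec c i) Filter.atTop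
      = g := by
  apply Filter.Tendsto.limsup_eq
  have hb : Tendsto (fun n : ℕ => g + (h i - (P ^ n).mulVec h i) * (n : ℝ)⁻¹)
      atTop (𝓝 g) := by
    have hz : Tendsto (fun n : ℕ => (h i - (P ^ n).mulVec h i) * (n : ℝ)⁻¹)
        atTop (𝓝 0) := by
      have hC : Tendsto (fun n : ℕ => (|h i| + ∑ j, |h j|) * (n : ℝ)⁻¹) atTop (𝓝 0) := by
        simpa using tendsto_inv_atTop_nhds_zero_nat.const_mul (|h i| + ∑ j, |h j|)
      refine squeeze_zero_norm (fun n => ?_) hC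
      rw [Real.norm_eq_abs, abs_mul, abs_inv, Nat.abs_cast]
      apply mul_le_mul_of_nonneg_right _ (inv_nonneg.2 (Nat.cast_nonneg n))
      calc |h i - (P ^ n).mulVec h i| ≤ |h i| + |(P ^ n).mulVec h i| := abs_sub _ _
        _ ≤ |h i| + ∑ j, |h j| := by
            have := mulVec_abs_le (pow_stoch h0 h1 n).1 (pow_stoch h0 h1 n).2 h i
            linarith
    have htend := Tendsto.const_add g hz
    simpa using htend
  apply hb.congr'
  filter_upwards [Filter.eventually_atTop.2 ⟨1, fun n hn => hn⟩] with n hn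
  have hne : (n : ℝ) ≠ 0 := Nat.cast_ne_zero.2 (by omega)
  rw [cesaro_exact h0 h1 hpois n i]
  field_simp
  ring

lemma limsup_avg_ge {P : Matrix S S ℝ} (h0 : ∀ i j, 0 ≤ P i j)
    (h1 : ∀ i, ∑ j, P i j = 1) {c h : S → ℝ} {g : ℝ}
    (hpois : ∀ i, h i ≤ c i - g + P.mulVec h i) (i : S) :
    g ≤ Filter.limsup
      (fun n : ℕ => (n : ℝ)⁻¹ * ∑ t ∈ Finset.range n, (P ^ t).mulVec c i)
      Filter.atTop := by
  set f := fun n : ℕ => (n : ℝ)⁻¹ * ∑ t ∈ Finset.range n, (P ^ t).mulVec c i with hf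
  set b := fun n : ℕ => g + (h i - (P ^ n).mulVec h i) * (n : ℝ)⁻¹ with hbdef
  have hb : Tendsto b atTop (𝓝 g) := by
    have hz : Tendsto (fun n : ℕ => (h i - (P ^ n).mulVec h i) * (n : ℝ)⁻¹)
        atTop (𝓝 0) := by
      have hC : Tendsto (fun n : ℕ => (|h i| + ∑ j, |h j|) * (n : ℝ)⁻¹) atTop (𝓝 0) := by
        simpa using tendsto_inv_atTop_nhds_zero_nat.const_mul (|h i| + ∑ j, |h j|)
      refine squeeze_zero_norm (fun n => ?_) hC
      rw [Real.norm_eq_abs, abs_mul, abs_inv, Nat.abs_cast]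
      apply mul_le_mul_of_nonneg_right _ (inv_nonneg.2 (Nat.cast_nonneg n))
      calc |h i - (P ^ n).mulVec h i| ≤ |h i| + |(P ^ n).mulVec h i| := abs_sub _ _
        _ ≤ |h i| + ∑ j, |h j| := by
            have := mulVec_abs_le (pow_stoch h0 h1 n).1 (pow_stoch h0 h1 n).2 h i
            linarith
    have htend := Tendsto.const_add g hz
    simpa [hbdef] using htend
  have hle : ∀ᶠ n in atTop, b n ≤ f n := by
    filter_upwards [Filter.eventually_atTop.2 ⟨1, fun n hn => hn⟩] with n hn
    have hnpos : (0 : ℝ) < (n : ℝ) := by exact_mod_cast (by omega : 0 < n)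
    have hces := cesaro_ge h0 h1 hpois n i
    have hne : (n : ℝ) ≠ 0 := ne_of_gt hnpos
    have h2 : (n : ℝ)⁻¹ * ((n : ℝ) * g + h i - (P ^ n).mulVec h i)
        ≤ (n : ℝ)⁻¹ * ∑ t ∈ Finset.range n, (P ^ t).mulVec c i :=
      mul_le_mul_of_nonneg_left hces (inv_nonneg.2 hnpos.le)
    have heq : (n : ℝ)⁻¹ * ((n : ℝ) * g + h i - (P ^ n).mulVec h i)
        = g + (h i - (P ^ n).mulVec h i) * (n : ℝ)⁻¹ := by
      field_simp
      ring
    show g + (h i - (P ^ n).mulVec h i) * (n : ℝ)⁻¹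
        ≤ (n : ℝ)⁻¹ * ∑ t ∈ Finset.range n, (P ^ t).mulVec c i
    rw [← heq]
    exact h2
  have hfbdd : IsBoundedUnder (· ≤ ·) atTop f := by
    refine isBoundedUnder_of ⟨∑ j, |c j|, fun n => ?_⟩
    rw [hf]
    rcases Nat.eq_zero_or_pos n with h | hpos
    · subst h
      simp
      positivity
    · have hnpos : (0 : ℝ) < (n : ℝ) := by exact_mod_cast hpos
      have hbound : ∑ t ∈ Finset.range n, (P ^ t).mulVec c i
          ≤ (n : ℝ) * ∑ j, |c j| := by
        calc ∑ t ∈ Finset.range n, (P ^ t).mulVec c i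
            ≤ ∑ t ∈ Finset.range n, ∑ j, |c j| := by
              refine Finset.sum_le_sum fun t _ => ?_
              have := mulVec_abs_le (pow_stoch h0 h1 t).1 (pow_stoch h0 h1 t).2 c i
              exact le_trans (le_abs_self _) this
          _ = (n : ℝ) * ∑ j, |c j| := by
              rw [Finset.sum_const, Finset.card_range, nsmul_eq_mul]
      calc (n : ℝ)⁻¹ * ∑ t ∈ Finset.range n, (P ^ t).mulVec c i
          ≤ (n : ℝ)⁻¹ * ((n : ℝ) * ∑ j, |c j|) :=
            mul_le_mul_of_nonneg_left hbound (inv_nonneg.2 hnpos.le)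
        _ = ∑ j, |c j| := by field_simp
  calc g = Filter.limsup b atTop := (hb.limsup_eq).symm
    _ ≤ Filter.limsup f atTop :=
        Filter.limsup_le_limsup hle (hb.isBoundedUnder_ge.isCoboundedUnder_le) hfbdd

end SF9aux4

section SF9aux5
set_option linter.unusedSectionVars false
open Finset Filter Topology

/-- Relative value recursion for the policy `e`. -/
noncomputable def YdFun {S A : Type*} [Fintype S] [DecidableEq S] (T : SFTree S)
    (M : MDP S A) (e : S → A) (x : ℝ) (i : S) : ℝ :=
  (M.c i (e i) - x + ∑ k ∈ (T.desc i).attach, M.ptail T i (e i) k.1 * YdFun T M e x k.1)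
    / M.p i (e i) (T.parent i)
termination_by (T.desc i).card
decreasing_by exact SFTree.desc_card_lt k.2

/-- Expected cycle-length recursion for the policy `e`. -/
noncomputable def TdFun {S A : Type*} [Fintype S] [DecidableEq S] (T : SFTree S)
    (M : MDP S A) (e : S → A) (i : S) : ℝ :=
  (1 + ∑ k ∈ (T.desc i).attach, M.ptail T i (e i) k.1 * TdFun T M e k.1)
    / M.p i (e i) (T.parent i)
termination_by (T.desc i).card
decreasing_by exact SFTree.desc_card_lt k.2

variable {S A : Type*} [Fintype S] [DecidableEq S]

lemma YdFun_eq (T : SFTree S) (M : MDP S A) (e : S → A) (x : ℝ) (i : S) :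
    YdFun T M e x i
      = (M.c i (e i) - x + ∑ k ∈ T.desc i, M.ptail T i (e i) k * YdFun T M e x k)
        / M.p i (e i) (T.parent i) := by
  rw [YdFun]
  congr 1
  rw [← Finset.sum_attach (T.desc i) fun k => M.ptail T i (e i) k * YdFun T M e x k]

lemma TdFun_eq (T : SFTree S) (M : MDP S A) (e : S → A) (i : S) :
    TdFun T M e i
      = (1 + ∑ k ∈ T.desc i, M.ptail T i (e i) k * TdFun T M e k)
        / M.p i (e i) (T.parent i) := by
  rw [TdFun]
  congr 1
  rw [← Finset.sum_attach (T.desc i) fun k => M.ptail T i (e i) k * TdFun T M e k]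

lemma TdFun_pos (T : SFTree S) (M : MDP S A) (e : S → A)
    (hpar : ∀ i, i ≠ T.root → ∀ a : A, 0 < M.p i a (T.parent i)) :
    ∀ i, i ≠ T.root → 0 < TdFun T M e i := by
  suffices h : ∀ n (i : S), (T.desc i).card = n → i ≠ T.root → 0 < TdFun T M e i by
    intro i hi; exact h _ i rfl hi
  intro n
  induction n using Nat.strong_induction_on with
  | _ n ih =>
    intro i hcard hi
    rw [TdFun_eq]
    apply div_pos _ (hpar i hi (e i))
    have hsum : 0 ≤ ∑ k ∈ T.desc i, M.ptail T i (e i) k * TdFun T M e k := by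
      refine Finset.sum_nonneg fun k hk => mul_nonneg (MDP.ptail_nonneg i (e i) k) ?_
      have hklt := SFTree.desc_card_lt hk
      rw [hcard] at hklt
      exact le_of_lt (ih _ hklt k rfl (SFTree.ne_root_of_mem_desc hk))
    linarith

/-- The given `t` is positive away from the root. -/
lemma t_pos_of_rec (T : SFTree S) (M : MDP S A) (aSel : S → A) (t : S → ℝ)
    (hpar : ∀ i, i ≠ T.root → ∀ a : A, 0 < M.p i a (T.parent i))
    (ht : ∀ i, i ≠ T.root →
      t i = (1 + ∑ k ∈ T.desc i, M.ptail T i (aSel i) k * t k)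
        / M.p i (aSel i) (T.parent i)) :
    ∀ i, i ≠ T.root → 0 < t i := by
  suffices h : ∀ n (i : S), (T.desc i).card = n → i ≠ T.root → 0 < t i by
    intro i hi; exact h _ i rfl hi
  intro n
  induction n using Nat.strong_induction_on with
  | _ n ih =>
    intro i hcard hi
    rw [ht i hi]
    apply div_pos _ (hpar i hi (aSel i))
    have hsum : 0 ≤ ∑ k ∈ T.desc i, M.ptail T i (aSel i) k * t k := by
      refine Finset.sum_nonneg fun k hk => mul_nonneg (MDP.ptail_nonneg i (aSel i) k) ?_
      have hklt := SFTree.desc_card_lt hk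
      rw [hcard] at hklt
      exact le_of_lt (ih _ hklt k rfl (SFTree.ne_root_of_mem_desc hk))
    linarith

/-- `y`, defined by the minimisation recursion, lies below the evaluation `YdFun` of any
policy `e`. -/
lemma y_le_YdFun [Fintype A] [Nonempty A] (T : SFTree S) (M : MDP S A) (e : S → A)
    (x : ℝ) (y : S → ℝ)
    (hpar : ∀ i, i ≠ T.root → ∀ a : A, 0 < M.p i a (T.parent i))
    (hy : ∀ i, i ≠ T.root →
      y i = ⨅ a : A, (M.c i a - x + ∑ k ∈ T.desc i, M.ptail T i a k * y k)
          / M.p i a (T.parent i)) :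
    ∀ i, i ≠ T.root → y i ≤ YdFun T M e x i := by
  suffices h : ∀ n (i : S), (T.desc i).card = n → i ≠ T.root → y i ≤ YdFun T M e x i by
    intro i hi; exact h _ i rfl hi
  intro n
  induction n using Nat.strong_induction_on with
  | _ n ih =>
    intro i hcard hi
    rw [hy i hi]
    have h1 : (⨅ a : A, (M.c i a - x + ∑ k ∈ T.desc i, M.ptail T i a k * y k)
          / M.p i a (T.parent i))
        ≤ (M.c i (e i) - x + ∑ k ∈ T.desc i, M.ptail T i (e i) k * y k)
          / M.p i (e i) (T.parent i) :=
      ciInf_le (Set.Finite.bddBelow (Set.finite_range _)) (e i)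
    refine le_trans h1 ?_
    rw [YdFun_eq]
    apply div_le_div_of_nonneg_right _ (le_of_lt (hpar i hi (e i)))
    have h2 : ∀ k ∈ T.desc i,
        M.ptail T i (e i) k * y k ≤ M.ptail T i (e i) k * YdFun T M e x k := by
      intro k hk
      apply mul_le_mul_of_nonneg_left _ (MDP.ptail_nonneg i (e i) k)
      have hklt := SFTree.desc_card_lt hk
      rw [hcard] at hklt
      exact ih _ hklt k rfl (SFTree.ne_root_of_mem_desc hk)
    have h3 := Finset.sum_le_sum h2
    linarith

end SF9aux5

section SF9aux6
set_option linter.unusedSectionVars false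
open Finset Filter Topology

variable {S A : Type*} [Fintype S] [DecidableEq S]

lemma mulVec_comb (M : MDP S A) (e : S → A) (u v : S → ℝ) (r : ℝ) (i : S) :
    (M.Pmat e).mulVec (fun j => u j - r * v j) i
      = (∑ j, M.p i (e i) j * u j) - r * ∑ j, M.p i (e i) j * v j := by
  have hpt : ∀ j, M.p i (e i) j * (u j - r * v j)
      = M.p i (e i) j * u j - r * (M.p i (e i) j * v j) := fun j => by ring
  simp only [Matrix.mulVec, dotProduct, MDP.Pmat, Matrix.of_apply]
  rw [Finset.sum_congr rfl fun j _ => hpt j, Finset.sum_sub_distrib, ← Finset.mul_sum]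

lemma avg_formula (T : SFTree S) (M : MDP S A) (hsf : M.IsSkipFree T)
    (e : S → A) (x : ℝ) (Y U : S → ℝ)
    (hY : ∀ i, i ≠ T.root →
      M.c i (e i) - x + ∑ k ∈ T.desc i, M.ptail T i (e i) k * Y k
        = M.p i (e i) (T.parent i) * Y i)
    (hU : ∀ i, i ≠ T.root →
      1 + ∑ k ∈ T.desc i, M.ptail T i (e i) k * U k
        = M.p i (e i) (T.parent i) * U i)
    (hτ : (1 + ∑ k ∈ T.desc T.root, M.ptail T T.root (e T.root) k * U k) ≠ 0) :
    M.avgCost e T.root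
      = x + (M.c T.root (e T.root) - x
            + ∑ k ∈ T.desc T.root, M.ptail T T.root (e T.root) k * Y k)
        / (1 + ∑ k ∈ T.desc T.root, M.ptail T T.root (e T.root) k * U k) := by
  set B := M.c T.root (e T.root) - x
      + ∑ k ∈ T.desc T.root, M.ptail T T.root (e T.root) k * Y k with hB
  set τ := 1 + ∑ k ∈ T.desc T.root, M.ptail T T.root (e T.root) k * U k with hτdef
  set r := B / τ with hr
  unfold MDP.avgCost
  apply limsup_avg_eq (h := fun j => Hfun T Y j - r * Hfun T U j) (g := x + r)
  case h0 => exact fun i j => M.p_nonneg i (e i) j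
  case h1 => exact fun i => M.p_sum_one i (e i)
  intro i
  rw [mulVec_comb M e (Hfun T Y) (Hfun T U) r i]
  by_cases hi : i = T.root
  · subst hi
    rw [Hfun_sum_root, Hfun_sum_root, Hfun_root, Hfun_root]
    simp only [MDP.cvec]
    have hrt : r * τ = B := div_mul_cancel₀ B hτ
    have hrt' : r + r * (∑ k ∈ T.desc T.root, M.ptail T T.root (e T.root) k * U k)
        = B := by
      rw [← hrt, hτdef]; ring
    have hBexp : B = M.c T.root (e T.root) - x
        + ∑ k ∈ T.desc T.root, M.ptail T T.root (e T.root) k * Y k := hB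
    linarith [hrt', hBexp]
  · rw [Hfun_sum_ne_root T M hsf Y hi, Hfun_sum_ne_root T M hsf U hi]
    simp only [MDP.cvec]
    have h1 := hY i hi
    have h2 := hU i hi
    have h3 : Hfun T U i - M.p i (e i) (T.parent i) * U i
          + ∑ k ∈ T.desc i, M.ptail T i (e i) k * U k
        = Hfun T U i - 1 := by linarith
    rw [h3]
    have h4 : r * (Hfun T U i - 1) = r * Hfun T U i - r := by ring
    rw [h4]
    linarith

end SF9aux6


set_option linter.unusedSectionVars false in
set_option maxHeartbeats 1000000 in
/-- for a finite recurrent skip-free MDP on a tree, `x = g(d)`, and the three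
choices `a₀¹, a₀², a₀³` of root action (minimising respectively the first-return ratio, the
root optimality-equation expression, and the average-cost ratio), the three updated policies
`d¹, d², d³` either all strictly improve on `d`, or all have the same average cost as `d`
and each (and `d` itself) is average cost optimal. -/
theorem stmt9 {S A : Type*} [Fintype S] [DecidableEq S] [Fintype A] [Nonempty A]
    (T : SFTree S) (M : MDP S A)
    (hsf : M.IsSkipFree T) (hrec : IsRecurrentModel M)
    (h00 : ∀ a : A, M.p T.root a T.root < 1)
    (hpar : ∀ i, i ≠ T.root → ∀ a : A, 0 < M.p i a (T.parent i))
    (d : S → A) (x : ℝ) (hx : x = M.avgCost d T.root)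
    (y t : S → ℝ) (aSel : S → A)
    (hy : ∀ i, i ≠ T.root →
      y i = ⨅ a : A, (M.c i a - x + ∑ k ∈ T.desc i, M.ptail T i a k * y k)
          / M.p i a (T.parent i))
    (ha : ∀ i, i ≠ T.root →
      (M.c i (aSel i) - x + ∑ k ∈ T.desc i, M.ptail T i (aSel i) k * y k)
          / M.p i (aSel i) (T.parent i) = y i)
    (ht : ∀ i, i ≠ T.root →
      t i = (1 + ∑ k ∈ T.desc i, M.ptail T i (aSel i) k * t k) / M.p i (aSel i) (T.parent i))
    (a01 a02 a03 : A)
    (h1 : (M.c T.root a01 - x + ∑ k ∈ T.desc T.root, M.ptail T T.root a01 k * y k)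
          / (1 - M.p T.root a01 T.root)
        = ⨅ a : A, (M.c T.root a - x + ∑ k ∈ T.desc T.root, M.ptail T T.root a k * y k)
          / (1 - M.p T.root a T.root))
    (h2 : (M.c T.root a02 - x + ∑ k ∈ T.desc T.root, M.ptail T T.root a02 k * y k)
        = ⨅ a : A, (M.c T.root a - x + ∑ k ∈ T.desc T.root, M.ptail T T.root a k * y k))
    (h3 : (M.c T.root a03 - x + ∑ k ∈ T.desc T.root, M.ptail T T.root a03 k * y k)
          / (1 + ∑ k ∈ T.desc T.root, M.ptail T T.root a03 k * t k)
        = ⨅ a : A, (M.c T.root a - x + ∑ k ∈ T.desc T.root, M.ptail T T.root a k * y k)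
          / (1 + ∑ k ∈ T.desc T.root, M.ptail T T.root a k * t k))
    (d1 d2 d3 : S → A)
    (hd1 : d1 T.root = a01 ∧ ∀ i, i ≠ T.root → d1 i = aSel i)
    (hd2 : d2 T.root = a02 ∧ ∀ i, i ≠ T.root → d2 i = aSel i)
    (hd3 : d3 T.root = a03 ∧ ∀ i, i ≠ T.root → d3 i = aSel i) :
    (M.avgCost d1 T.root < M.avgCost d T.root
      ∧ M.avgCost d2 T.root < M.avgCost d T.root
      ∧ M.avgCost d3 T.root < M.avgCost d T.root)
    ∨ (M.avgCost d1 T.root = M.avgCost d T.root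
      ∧ M.avgCost d2 T.root = M.avgCost d T.root
      ∧ M.avgCost d3 T.root = M.avgCost d T.root
      ∧ (∀ d' : S → A, M.avgCost d T.root ≤ M.avgCost d' T.root)
      ∧ (∀ d' : S → A, M.avgCost d1 T.root ≤ M.avgCost d' T.root)
      ∧ (∀ d' : S → A, M.avgCost d2 T.root ≤ M.avgCost d' T.root)
      ∧ (∀ d' : S → A, M.avgCost d3 T.root ≤ M.avgCost d' T.root)) := by
  classical
  -- abbreviations
  set Bv : A → ℝ := fun a =>
    M.c T.root a - x + ∑ k ∈ T.desc T.root, M.ptail T T.root a k * y k with hBv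
  set τv : A → ℝ := fun a =>
    1 + ∑ k ∈ T.desc T.root, M.ptail T T.root a k * t k with hτv
  have bddb : ∀ f : A → ℝ, BddBelow (Set.range f) :=
    fun f => (Set.finite_range f).bddBelow
  -- positivity of t and τ
  have htpos : ∀ i, i ≠ T.root → 0 < t i := t_pos_of_rec T M aSel t hpar ht
  have hτpos : ∀ a : A, 0 < τv a := by
    intro a
    have hsum : 0 ≤ ∑ k ∈ T.desc T.root, M.ptail T T.root a k * t k :=
      Finset.sum_nonneg fun k hk => mul_nonneg (MDP.ptail_nonneg T.root a k)
        (le_of_lt (htpos k (SFTree.ne_root_of_mem_desc hk)))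
    have : τv a = 1 + ∑ k ∈ T.desc T.root, M.ptail T T.root a k * t k := rfl
    rw [this]
    linarith
  -- average cost formula for any policy agreeing with aSel off the root
  have key : ∀ e : S → A, (∀ i, i ≠ T.root → e i = aSel i) →
      M.avgCost e T.root = x + Bv (e T.root) / τv (e T.root) := by
    intro e he
    refine avg_formula T M hsf e x y t ?_ ?_ (ne_of_gt (hτpos (e T.root)))
    · intro i hi
      rw [he i hi]
      have hp := ne_of_gt (hpar i hi (aSel i))
      have heq := ha i hi
      rw [div_eq_iff hp] at heq
      linarith [heq]
    · intro i hi
      rw [he i hi]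
      have hp := ne_of_gt (hpar i hi (aSel i))
      have heq := ht i hi
      rw [eq_div_iff hp] at heq
      linarith [heq]
  have g1 := key d1 hd1.2
  have g2 := key d2 hd2.2
  have g3 := key d3 hd3.2
  rw [hd1.1] at g1
  rw [hd2.1] at g2
  rw [hd3.1] at g3
  -- average cost formula for d itself
  have hYd : ∀ i, i ≠ T.root →
      M.c i (d i) - x + ∑ k ∈ T.desc i, M.ptail T i (d i) k * YdFun T M d x k
        = M.p i (d i) (T.parent i) * YdFun T M d x i := by
    intro i hi
    have hp := ne_of_gt (hpar i hi (d i))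
    have heq := YdFun_eq T M d x i
    rw [eq_div_iff hp] at heq
    linarith [heq]
  have hTd : ∀ i, i ≠ T.root →
      1 + ∑ k ∈ T.desc i, M.ptail T i (d i) k * TdFun T M d k
        = M.p i (d i) (T.parent i) * TdFun T M d i := by
    intro i hi
    have hp := ne_of_gt (hpar i hi (d i))
    have heq := TdFun_eq T M d i
    rw [eq_div_iff hp] at heq
    linarith [heq]
  have hτdpos : 0 < 1 + ∑ k ∈ T.desc T.root, M.ptail T T.root (d T.root) k * TdFun T M d k := by
    have hsum : 0 ≤ ∑ k ∈ T.desc T.root, M.ptail T T.root (d T.root) k * TdFun T M d k :=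
      Finset.sum_nonneg fun k hk => mul_nonneg (MDP.ptail_nonneg T.root (d T.root) k)
        (le_of_lt (TdFun_pos T M d hpar k (SFTree.ne_root_of_mem_desc hk)))
    linarith
  have gd := avg_formula T M hsf d x (YdFun T M d x) (TdFun T M d) hYd hTd (ne_of_gt hτdpos)
  have hBd : M.c T.root (d T.root) - x
      + ∑ k ∈ T.desc T.root, M.ptail T T.root (d T.root) k * YdFun T M d x k = 0 := by
    have hxx : x = x + (M.c T.root (d T.root) - x
        + ∑ k ∈ T.desc T.root, M.ptail T T.root (d T.root) k * YdFun T M d x k)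
        / (1 + ∑ k ∈ T.desc T.root, M.ptail T T.root (d T.root) k * TdFun T M d k) :=
      hx.trans gd
    have hzero : (M.c T.root (d T.root) - x
        + ∑ k ∈ T.desc T.root, M.ptail T T.root (d T.root) k * YdFun T M d x k)
        / (1 + ∑ k ∈ T.desc T.root, M.ptail T T.root (d T.root) k * TdFun T M d k) = 0 := by
      linarith
    rcases div_eq_zero_iff.1 hzero with h | h
    · exact h
    · exact absurd h (ne_of_gt hτdpos)
  -- B(d root) ≤ 0
  have hyle : ∀ i, i ≠ T.root → y i ≤ YdFun T M d x i := y_le_YdFun T M d x y hpar hy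
  have hBvd : Bv (d T.root) ≤ 0 := by
    have hsum : ∑ k ∈ T.desc T.root, M.ptail T T.root (d T.root) k * y k
        ≤ ∑ k ∈ T.desc T.root, M.ptail T T.root (d T.root) k * YdFun T M d x k :=
      Finset.sum_le_sum fun k hk => mul_le_mul_of_nonneg_left
        (hyle k (SFTree.ne_root_of_mem_desc hk)) (MDP.ptail_nonneg T.root (d T.root) k)
    have hBexp : Bv (d T.root) = M.c T.root (d T.root) - x
        + ∑ k ∈ T.desc T.root, M.ptail T T.root (d T.root) k * y k := rfl
    rw [hBexp]
    linarith
  -- minimality facts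
  have hmin2 : ∀ a : A, Bv a02 ≤ Bv a := by
    intro a
    have h2' : Bv a02 = ⨅ a : A, Bv a := h2
    exact le_trans (le_of_eq h2') (ciInf_le (bddb _) a)
  have hmin1 : ∀ a : A, Bv a01 / (1 - M.p T.root a01 T.root)
      ≤ Bv a / (1 - M.p T.root a T.root) := by
    intro a
    have h1' : Bv a01 / (1 - M.p T.root a01 T.root)
        = ⨅ a : A, Bv a / (1 - M.p T.root a T.root) := h1
    exact le_trans (le_of_eq h1') (ciInf_le (bddb _) a)
  have hmin3 : ∀ a : A, Bv a03 / τv a03 ≤ Bv a / τv a := by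
    intro a
    have h3' : Bv a03 / τv a03 = ⨅ a : A, Bv a / τv a := h3
    exact le_trans (le_of_eq h3') (ciInf_le (bddb _) a)
  have hdenpos : ∀ a : A, 0 < 1 - M.p T.root a T.root := fun a => by linarith [h00 a]
  rcases lt_or_ge (Bv a02) 0 with hneg | hpos
  · -- strict improvement case
    left
    have hB1neg : Bv a01 < 0 := by
      by_contra hc
      push_neg at hc
      have hr1 : 0 ≤ Bv a01 / (1 - M.p T.root a01 T.root) :=
        div_nonneg hc (le_of_lt (hdenpos a01))
      have hr2 : Bv a02 / (1 - M.p T.root a02 T.root) < 0 :=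
        div_neg_of_neg_of_pos hneg (hdenpos a02)
      linarith [hmin1 a02]
    have hB3neg : Bv a03 / τv a03 < 0 := by
      have hr2 : Bv a02 / τv a02 < 0 := div_neg_of_neg_of_pos hneg (hτpos a02)
      linarith [hmin3 a02]
    refine ⟨?_, ?_, ?_⟩
    · rw [g1, ← hx]
      have := div_neg_of_neg_of_pos hB1neg (hτpos a01)
      linarith
    · rw [g2, ← hx]
      have := div_neg_of_neg_of_pos hneg (hτpos a02)
      linarith
    · rw [g3, ← hx]
      linarith
  · -- optimality case
    have hB2 : Bv a02 = 0 := le_antisymm (le_trans (hmin2 (d T.root)) hBvd) hpos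
    have hall : ∀ a : A, 0 ≤ Bv a := fun a => hB2 ▸ hmin2 a
    have hB1 : Bv a01 = 0 := by
      have hr1le : Bv a01 / (1 - M.p T.root a01 T.root) ≤ 0 := by
        have := hmin1 a02
        rw [hB2, zero_div] at this
        exact this
      have hr1ge : 0 ≤ Bv a01 / (1 - M.p T.root a01 T.root) :=
        div_nonneg (hall a01) (le_of_lt (hdenpos a01))
      have hr0 : Bv a01 / (1 - M.p T.root a01 T.root) = 0 := le_antisymm hr1le hr1ge
      rcases div_eq_zero_iff.1 hr0 with h | h
      · exact h
      · exact absurd h (ne_of_gt (hdenpos a01))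
    have hB3 : Bv a03 = 0 := by
      have hr3le : Bv a03 / τv a03 ≤ 0 := by
        have := hmin3 a02
        rw [hB2, zero_div] at this
        exact this
      have hr3ge : 0 ≤ Bv a03 / τv a03 := div_nonneg (hall a03) (le_of_lt (hτpos a03))
      have hr0 : Bv a03 / τv a03 = 0 := le_antisymm hr3le hr3ge
      rcases div_eq_zero_iff.1 hr0 with h | h
      · exact h
      · exact absurd h (ne_of_gt (hτpos a03))
    have he1 : M.avgCost d1 T.root = x := by rw [g1, hB1, zero_div, add_zero]
    have he2 : M.avgCost d2 T.root = x := by rw [g2, hB2, zero_div, add_zero]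
    have he3 : M.avgCost d3 T.root = x := by rw [g3, hB3, zero_div, add_zero]
    -- optimality of x
    have hopt : ∀ d' : S → A, x ≤ M.avgCost d' T.root := by
      intro d'
      unfold MDP.avgCost
      apply limsup_avg_ge (h := Hfun T y) (g := x)
      case h0 => exact fun i j => M.p_nonneg i (d' i) j
      case h1 => exact fun i => M.p_sum_one i (d' i)
      intro i
      rw [mulVec_sum_eq M d' (Hfun T y) i]
      by_cases hi : i = T.root
      · subst hi
        rw [Hfun_sum_root, Hfun_root]
        have := hall (d' T.root)
        have hBexp : Bv (d' T.root) = M.c T.root (d' T.root) - x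
            + ∑ k ∈ T.desc T.root, M.ptail T T.root (d' T.root) k * y k := rfl
        rw [hBexp] at this
        simp only [MDP.cvec]
        linarith
      · rw [Hfun_sum_ne_root T M hsf y hi]
        have hp := hpar i hi (d' i)
        have hIle : y i ≤ (M.c i (d' i) - x + ∑ k ∈ T.desc i, M.ptail T i (d' i) k * y k)
            / M.p i (d' i) (T.parent i) := by
          rw [hy i hi]
          exact ciInf_le (bddb _) (d' i)
        rw [le_div_iff₀ hp] at hIle
        simp only [MDP.cvec]
        linarith
    right
    rw [he1, he2, he3, ← hx]
    exact ⟨rfl, rfl, rfl, hopt, hopt, hopt, hopt⟩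
end SF9aux2
end
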